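/- arXiv:2306.03300 — 3 statements merged into one kernel-verified Lean document; each statement's English description precedes it below -/
import Mathlib

section
/- For every real a ≥ 1 there exists a constant C > 0 such that for every p_F ≥ 1, every k ∈ ℤ³ with 1 ≤ |k| ≤ a, and every q ∈ ℤ³, one has N(q, k) ≤ C·p_F. -/
set_option maxHeartbeats 2000000
open Real Finset

lemma one_le_sq_aux {a : ℝ} (ha : 1 ≤ a) : 1 ≤ a^2 := by nlinarith

lemma sqrt_sub_sqrt_le (A B : ℝ) (hB : 0 ≤ B) (hBA : B ≤ A) :
    Real.sqrt A - Real.sqrt B ≤ Real.sqrt (A - B) := by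
  have h1 : Real.sqrt A ≤ Real.sqrt (A - B) + Real.sqrt B := by
    rw [Real.sqrt_le_iff]
    constructor
    · positivity
    · have e1 : Real.sqrt (A - B) ^ 2 = A - B := Real.sq_sqrt (by linarith)
      have e2 : Real.sqrt B ^ 2 = B := Real.sq_sqrt hB
      nlinarith [Real.sqrt_nonneg (A - B), Real.sqrt_nonneg B]
  linarith

lemma sum_inv_sqrt_le (N : ℕ) :
    ∑ n ∈ Finset.range N, (1:ℝ)/Real.sqrt (n+1) ≤ 2 * Real.sqrt N := by
  induction N with
  | zero => simp
  | succ n ih =>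
    rw [Finset.sum_range_succ]
    have h0 : (0:ℝ) < Real.sqrt (n+1) := by positivity
    have key : (1:ℝ)/Real.sqrt (n+1) ≤ 2 * (Real.sqrt (n+1) - Real.sqrt n) := by
      have e1 : Real.sqrt (n+1) ^ 2 = (n:ℝ)+1 := Real.sq_sqrt (by positivity)
      have e2 : Real.sqrt n ^ 2 = (n:ℝ) := Real.sq_sqrt (by positivity)
      have h2 : Real.sqrt n ≤ Real.sqrt (n+1) := Real.sqrt_le_sqrt (by linarith)
      rw [div_le_iff₀ h0]
      nlinarith [Real.sqrt_nonneg (n:ℝ)]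
    have : ((n:ℝ)+1) = ((n+1 : ℕ) : ℝ) := by push_cast; ring
    calc ∑ x ∈ Finset.range n, (1:ℝ)/Real.sqrt (x+1) + 1/Real.sqrt (n+1)
        ≤ 2 * Real.sqrt n + 2 * (Real.sqrt (n+1) - Real.sqrt n) := by linarith
      _ = 2 * Real.sqrt (n+1) := by ring
      _ = 2 * Real.sqrt ((n+1:ℕ)) := by rw [← this]
  
lemma mem_int_Icc {A B : ℝ} {y : ℤ} (h1 : A ≤ y) (h2 : (y:ℝ) ≤ B) :
    y ∈ Finset.Icc ⌈A⌉ ⌊B⌋ := by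
  simp only [Finset.mem_Icc]
  exact ⟨Int.ceil_le.mpr h1, Int.le_floor.mpr h2⟩

lemma int_card_le {A B : ℝ} (h : A ≤ B) :
    ((Finset.Icc ⌈A⌉ ⌊B⌋).card : ℝ) ≤ B - A + 1 := by
  rw [Int.card_Icc]
  have h1 : ((⌊B⌋ + 1 - ⌈A⌉ : ℤ) : ℝ) ≤ B - A + 1 := by
    push_cast
    have := Int.floor_le B
    have := Int.le_ceil A
    linarith
  rcases le_or_gt (⌊B⌋ + 1 - ⌈A⌉ : ℤ) 0 with hle | hpos
  · have : (⌊B⌋ + 1 - ⌈A⌉ : ℤ).toNat = 0 := Int.toNat_of_nonpos hle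
    rw [this]
    norm_num
    linarith
  · rw [show (((⌊B⌋ + 1 - ⌈A⌉ : ℤ).toNat : ℝ)) = ((⌊B⌋ + 1 - ⌈A⌉ : ℤ) : ℝ) by
      exact_mod_cast congrArg (Int.cast : ℤ → ℝ) (Int.toNat_of_nonneg (le_of_lt hpos))]
    exact h1

lemma le_of_sq_le_sq' {x y : ℝ} (h : x^2 ≤ y^2) (hy : 0 ≤ y) : x ≤ y := by
  nlinarith [sq_nonneg (x - y), sq_nonneg (x + y)]

lemma sqrt_window (A u W : ℝ) (h0 : 0 ≤ u) (huW : u ≤ W) :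
    Real.sqrt A - Real.sqrt (A - u) ≤ Real.sqrt W := by
  rcases le_or_gt (A - u) 0 with h | h
  · have h1 : Real.sqrt (A - u) = 0 := Real.sqrt_eq_zero_of_nonpos h
    rw [h1]
    have h2 : A ≤ W := by linarith
    calc Real.sqrt A - 0 = Real.sqrt A := by ring
      _ ≤ Real.sqrt W := Real.sqrt_le_sqrt h2
  · calc Real.sqrt A - Real.sqrt (A - u) ≤ Real.sqrt (A - (A - u)) :=
        sqrt_sub_sqrt_le A (A - u) (le_of_lt h) (by linarith)
    _ = Real.sqrt u := by ring_nf
    _ ≤ Real.sqrt W := Real.sqrt_le_sqrt huW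

lemma good_pt (g α Wr R dr : ℝ) (hα1 : 1 ≤ α) (hW1 : 0 < Wr) (hgW : Wr ≤ g)
    (hR1 : 0 < R) (hdr0 : 0 < dr) (hgRdr : R*dr ≤ g) :
    Real.sqrt (g/α) - Real.sqrt ((g-Wr)/α) ≤ (Wr/Real.sqrt R)*(1/Real.sqrt dr) := by
  have hα0 : (0:ℝ) < α := by linarith
  have hg0 : (0:ℝ) < g := by linarith
  set sa := Real.sqrt α with hsa
  have hsa2 : sa^2 = α := Real.sq_sqrt (le_of_lt hα0)
  have hsa1 : 1 ≤ sa := by nlinarith [Real.sqrt_nonneg α]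
  set t := Real.sqrt (g/α) with ht
  set s := Real.sqrt ((g-Wr)/α) with hs
  have ht2 : t^2 = g/α := Real.sq_sqrt (by positivity)
  have hs2 : s^2 = (g-Wr)/α := Real.sq_sqrt (by apply div_nonneg _ (le_of_lt hα0); linarith)
  have ht0 : 0 ≤ t := Real.sqrt_nonneg _
  have hs0 : 0 ≤ s := Real.sqrt_nonneg _
  have hst : s ≤ t := Real.sqrt_le_sqrt ((div_le_div_iff_of_pos_right hα0).mpr (by linarith))
  have hsg : Real.sqrt g = sa * t := by
    rw [ht, Real.sqrt_div (le_of_lt hg0) α]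
    field_simp
    exact hsa.symm
  have hsgpos : 0 < Real.sqrt g := Real.sqrt_pos.mpr hg0
  have hfg : t - s ≤ Wr / Real.sqrt g := by
    rw [le_div_iff₀ hsgpos, hsg]
    have hdiff : (t - s) * (t + s) = Wr/α := by
      have h9 : (t - s) * (t + s) = t^2 - s^2 := by ring
      rw [h9, ht2, hs2]
      field_simp
      ring
    have hWreq : Wr = α * ((t - s) * (t + s)) := by rw [hdiff]; field_simp
    have hkey : 0 ≤ sa * (t - s) * (sa * (t + s) - t) := by
      apply mul_nonneg (mul_nonneg (by linarith) (by linarith))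
      nlinarith
    nlinarith
  have hsq : Real.sqrt (R*dr) ≤ Real.sqrt g := Real.sqrt_le_sqrt hgRdr
  calc t - s ≤ Wr / Real.sqrt g := hfg
    _ ≤ Wr / Real.sqrt (R*dr) := by
        apply div_le_div_of_nonneg_left (by linarith) (Real.sqrt_pos.mpr (by positivity)) hsq
    _ = (Wr/Real.sqrt R)*(1/Real.sqrt dr) := by
        rw [Real.sqrt_mul (le_of_lt hR1)]
        have h1 : Real.sqrt R ≠ 0 := by positivity
        have h2 : Real.sqrt dr ≠ 0 := by positivity
        field_simp

lemma Qid (k₀ k₁ k₂ c x y z : ℤ) (hk₀ : k₀ ≠ 0) (h : k₀*z + k₁*x + k₂*y = c) :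
    ((x^2+y^2+z^2 : ℤ):ℝ) =
      ((k₀:ℝ)^2 + (k₂:ℝ)^2)/(k₀:ℝ)^2 *
        ((y:ℝ) - (k₂:ℝ)*((c:ℝ) - (k₁:ℝ)*(x:ℝ))/((k₀:ℝ)^2 + (k₂:ℝ)^2))^2 +
      ((x:ℝ)^2 + ((c:ℝ) - (k₁:ℝ)*(x:ℝ))^2/((k₀:ℝ)^2 + (k₂:ℝ)^2)) := by
  have hk₀' : (k₀:ℝ) ≠ 0 := Int.cast_ne_zero.mpr hk₀
  have hκ₂ : (k₀:ℝ)^2 + (k₂:ℝ)^2 ≠ 0 := by positivity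
  have hzz : (k₀*z : ℤ) = c - k₁*x - k₂*y := by linarith
  have hz : (k₀:ℝ)*(z:ℝ) = (c:ℝ) - (k₁:ℝ)*(x:ℝ) - (k₂:ℝ)*(y:ℝ) := by exact_mod_cast hzz
  have hz2 : (z:ℝ) = ((c:ℝ) - (k₁:ℝ)*(x:ℝ) - (k₂:ℝ)*(y:ℝ))/(k₀:ℝ) := by
    rw [eq_div_iff hk₀']; linarith
  push_cast
  rw [hz2]
  field_simp
  ring

lemma side_sum (S : Finset ℤ) (f : ℤ → ℝ) (R W : ℝ) (X : ℤ)
    (hR : 1 ≤ R) (hW : 0 ≤ W)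
    (hf0 : ∀ x ∈ S, 0 ≤ f x)
    (hf1 : ∀ x ∈ S, f x ≤ Real.sqrt W)
    (hX : ∀ x ∈ S, x ≤ X)
    (hspan : ∀ x ∈ S, ((X - x : ℤ) : ℝ) ≤ R)
    (hf2 : ∀ x ∈ S, x ≠ X → f x ≤ (W / Real.sqrt R) * (1 / Real.sqrt ((X - x : ℤ)))) :
    ∑ x ∈ S, f x ≤ Real.sqrt W + 3 * W := by
  classical
  have hRpos : (0:ℝ) < R := by linarith
  have hsR : (0:ℝ) < Real.sqrt R := Real.sqrt_pos.mpr hRpos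
  rw [← Finset.sum_filter_add_sum_filter_not S (fun x => x = X)]
  have h1 : ∑ x ∈ S.filter (fun x => x = X), f x ≤ Real.sqrt W := by
    have hsub : S.filter (fun x => x = X) ⊆ {X} := by
      intro x hx
      simp only [Finset.mem_filter] at hx
      simp [hx.2]
    rcases Finset.subset_singleton_iff.mp hsub with he | he
    · rw [he]; simp only [Finset.sum_empty]; positivity
    · rw [he, Finset.sum_singleton]
      have hXS : X ∈ S.filter (fun x => x = X) := by rw [he]; exact Finset.mem_singleton_self X
      exact hf1 X (Finset.mem_filter.mp hXS).1
  have h2 : ∑ x ∈ S.filter (fun x => ¬ x = X), f x ≤ 3 * W := by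
    set T := S.filter (fun x => ¬ x = X) with hT
    have hmem : ∀ x ∈ T, x ∈ S ∧ x ≠ X := by
      intro x hx; exact Finset.mem_filter.mp hx
    have step1 : ∑ x ∈ T, f x ≤ ∑ x ∈ T, (W / Real.sqrt R) * (1 / Real.sqrt ((X - x : ℤ))) := by
      apply Finset.sum_le_sum
      intro x hx
      exact hf2 x (hmem x hx).1 (hmem x hx).2
    set g : ℤ → ℕ := fun x => (X - x - 1).toNat with hg
    have hpos' : ∀ x ∈ T, 0 ≤ X - x - 1 := by
      intro x hx
      have := hX x (hmem x hx).1
      have := (hmem x hx).2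
      omega
    have hginj : Set.InjOn g T := by
      intro x hx y hy hxy
      have h1 := hpos' x hx
      have h2 := hpos' y hy
      simp only [hg] at hxy
      omega
    have hterm : ∀ x ∈ T, (1 : ℝ) / Real.sqrt ((X - x : ℤ)) = 1 / Real.sqrt ((g x : ℕ) + 1) := by
      intro x hx
      congr 2
      have := hpos' x hx
      simp only [hg]
      rw [show (((X - x - 1).toNat : ℕ) : ℝ) = ((X - x - 1 : ℤ) : ℝ) by exact_mod_cast congrArg (Int.cast : ℤ → ℝ) (Int.toNat_of_nonneg this)]
      push_cast
      ring
    set M : ℕ := ⌈R⌉.toNat with hM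
    have himg : T.image g ⊆ Finset.range M := by
      intro n hn
      rcases Finset.mem_image.mp hn with ⟨x, hx, rfl⟩
      rw [Finset.mem_range, hM]
      rw [Int.lt_toNat]
      have hsp := hspan x (hmem x hx).1
      have : ((X - x - 1 : ℤ) : ℝ) < ⌈R⌉ := by
        push_cast
        have := Int.le_ceil R
        push_cast at hsp ⊢
        linarith
      have h9 := hpos' x hx
      have : ((g x : ℤ)) = X - x - 1 := Int.toNat_of_nonneg h9
      rw [this]
      exact_mod_cast ‹((X - x - 1 : ℤ) : ℝ) < ⌈R⌉›
    have step2 : ∑ x ∈ T, (1:ℝ) / Real.sqrt ((X - x : ℤ)) ≤ 2 * Real.sqrt M := by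
      calc ∑ x ∈ T, (1:ℝ) / Real.sqrt ((X - x : ℤ))
          = ∑ x ∈ T, (1:ℝ) / Real.sqrt ((g x : ℕ) + 1) := Finset.sum_congr rfl hterm
        _ = ∑ n ∈ T.image g, (1:ℝ) / Real.sqrt ((n : ℕ) + 1) := by
            rw [Finset.sum_image (fun x hx y hy h => hginj hx hy h)]
        _ ≤ ∑ n ∈ Finset.range M, (1:ℝ) / Real.sqrt ((n : ℕ) + 1) := by
            apply Finset.sum_le_sum_of_subset_of_nonneg himg
            intro n _ _
            positivity
        _ ≤ 2 * Real.sqrt M := sum_inv_sqrt_le M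
    have hMR : (M : ℝ) ≤ R + 1 := by
      rw [hM]
      have h0 : (0:ℤ) ≤ ⌈R⌉ := by
        have := Int.le_ceil R; positivity
      rw [show ((⌈R⌉.toNat : ℕ) : ℝ) = ((⌈R⌉ : ℤ) : ℝ) by exact_mod_cast congrArg (Int.cast : ℤ → ℝ) (Int.toNat_of_nonneg h0)]
      have := Int.ceil_lt_add_one R
      push_cast at this ⊢
      linarith
    have hsqM : Real.sqrt M ≤ Real.sqrt 2 * Real.sqrt R := by
      rw [← Real.sqrt_mul (by norm_num : (0:ℝ) ≤ 2)]
      apply Real.sqrt_le_sqrt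
      linarith
    calc ∑ x ∈ T, f x ≤ (W / Real.sqrt R) * ∑ x ∈ T, (1:ℝ) / Real.sqrt ((X - x : ℤ)) := by
          rw [Finset.mul_sum]; exact step1
      _ ≤ (W / Real.sqrt R) * (2 * Real.sqrt M) := by
          apply mul_le_mul_of_nonneg_left _ (by positivity)
          linarith
      _ ≤ (W / Real.sqrt R) * (2 * (Real.sqrt 2 * Real.sqrt R)) := by
          apply mul_le_mul_of_nonneg_left _ (by positivity)
          nlinarith
      _ = 2 * Real.sqrt 2 * W := by field_simp
      _ ≤ 3 * W := by nlinarith [Real.sq_sqrt (by norm_num : (0:ℝ) ≤ 2), Real.sqrt_nonneg 2, hW]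
  linarith
lemma core_count (a pF : ℝ) (ha : 1 ≤ a) (hpF : 1 ≤ pF)
    (k₀ k₁ k₂ c : ℤ) (hk₀ : k₀ ≠ 0)
    (hKa : ((k₀^2 + k₁^2 + k₂^2 : ℤ) : ℝ) ≤ a^2) :
    ∃ G : Finset (ℤ × ℤ × ℤ),
      {p : ℤ × ℤ × ℤ | k₀ * p.2.2 + k₁ * p.1 + k₂ * p.2.1 = c ∧
        pF^2 - (2*(c:ℝ) + ((k₀^2+k₁^2+k₂^2 : ℤ):ℝ)) < ((p.1^2 + p.2.1^2 + p.2.2^2 : ℤ) : ℝ) ∧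
        ((p.1^2 + p.2.1^2 + p.2.2^2 : ℤ) : ℝ) ≤ pF^2} ⊆ ↑G ∧
      (G.card : ℝ) ≤ 100 * a^2 * pF := by
  classical
  have hpF0 : (0:ℝ) < pF := by linarith
  set P : ℝ := pF^2 with hP
  set Kz : ℤ := k₀^2 + k₁^2 + k₂^2 with hKz
  set Wr : ℝ := 2*(c:ℝ) + (Kz:ℝ) with hWr
  set B : Finset ℤ := Finset.Icc ⌈-pF⌉ ⌊pF⌋ with hB
  set cond : ℤ × ℤ × ℤ → Prop := fun p =>
    k₀ * p.2.2 + k₁ * p.1 + k₂ * p.2.1 = c ∧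
    P - Wr < ((p.1^2 + p.2.1^2 + p.2.2^2 : ℤ) : ℝ) ∧
    ((p.1^2 + p.2.1^2 + p.2.2^2 : ℤ) : ℝ) ≤ P with hcond
  set G : Finset (ℤ × ℤ × ℤ) := (B ×ˢ B ×ˢ B).filter cond with hG
  have coordmem : ∀ u v w : ℤ, ((u^2 + v^2 + w^2 : ℤ) : ℝ) ≤ P → u ∈ B := by
    intro u v w h
    have h1 : ((u:ℝ))^2 ≤ pF^2 := by push_cast at h; nlinarith
    apply mem_int_Icc
    · nlinarith
    · nlinarith
  refine ⟨G, ?_, ?_⟩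
  · intro p hp
    simp only [Set.mem_setOf_eq] at hp
    have hc : cond p := by
      rw [hcond]
      exact ⟨hp.1, hp.2.1, hp.2.2⟩
    have h1 : p.1 ∈ B := coordmem _ p.2.1 p.2.2 hc.2.2
    have h2 : p.2.1 ∈ B := by
      apply coordmem p.2.1 p.1 p.2.2
      have := hc.2.2; push_cast at this ⊢; linarith
    have h3 : p.2.2 ∈ B := by
      apply coordmem p.2.2 p.1 p.2.1
      have := hc.2.2; push_cast at this ⊢; linarith
    rw [hG]
    simp only [Finset.coe_filter, Set.mem_setOf_eq]
    exact ⟨Finset.mem_product.mpr ⟨h1, Finset.mem_product.mpr ⟨h2, h3⟩⟩, hc⟩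
  -- card bound
  rcases Finset.eq_empty_or_nonempty G with hGe | ⟨⟨xw, yw, zw⟩, hw⟩
  · rw [hGe]; simp; positivity
  have hwc : cond (xw, yw, zw) := (Finset.mem_filter.mp hw).2
  have hK1 : (1:ℝ) ≤ (Kz:ℝ) := by
    have h1 : (1:ℤ) ≤ Kz := by
      have h2 : 1 ≤ k₀^2 := by rcases hk₀.lt_or_gt with h|h <;> nlinarith
      rw [hKz]; nlinarith [sq_nonneg k₁, sq_nonneg k₂]
    exact_mod_cast h1
  have hW1 : (1:ℝ) ≤ Wr := by
    have h0 : (0:ℝ) < Wr := by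
      have h1 := hwc.2.1; have h2 := hwc.2.2; linarith
    have hcast : ((2*c + Kz : ℤ):ℝ) = Wr := by rw [hWr]; push_cast; ring
    have h1 : (0:ℤ) < 2*c + Kz := by
      by_contra hcon
      push_neg at hcon
      have : ((2*c + Kz : ℤ):ℝ) ≤ 0 := by exact_mod_cast hcon
      linarith
    have h2 : (1:ℤ) ≤ 2*c + Kz := h1
    calc (1:ℝ) ≤ ((2*c + Kz : ℤ):ℝ) := by exact_mod_cast h2
      _ = Wr := hcast
  have hW0 : (0:ℝ) ≤ Wr := by linarith
  have hsW0 : (0:ℝ) ≤ Real.sqrt Wr := Real.sqrt_nonneg _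
  have hsW1 : Real.sqrt Wr ≤ Wr := by
    nlinarith [Real.sq_sqrt hW0, Real.sqrt_nonneg Wr]
  have hCS : ((c:ℝ))^2 ≤ (Kz:ℝ) * P := by
    have hceq : (c:ℝ) = (k₀:ℝ)*(zw:ℝ) + (k₁:ℝ)*(xw:ℝ) + (k₂:ℝ)*(yw:ℝ) := by
      exact_mod_cast congrArg (Int.cast : ℤ → ℝ) hwc.1.symm
    have hQ : ((xw^2 + yw^2 + zw^2 : ℤ):ℝ) ≤ P := hwc.2.2
    push_cast at hQ
    rw [hceq]
    have hKz' : ((Kz:ℤ):ℝ) = (k₀:ℝ)^2+(k₁:ℝ)^2+(k₂:ℝ)^2 := by rw [hKz]; push_cast; ring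
    have key : ((k₀:ℝ)*(zw:ℝ) + (k₁:ℝ)*(xw:ℝ) + (k₂:ℝ)*(yw:ℝ))^2
        ≤ ((k₀:ℝ)^2+(k₁:ℝ)^2+(k₂:ℝ)^2) * ((xw:ℝ)^2+(yw:ℝ)^2+(zw:ℝ)^2) := by
      nlinarith [sq_nonneg ((k₀:ℝ)*(xw:ℝ) - (k₁:ℝ)*(zw:ℝ)),
        sq_nonneg ((k₀:ℝ)*(yw:ℝ) - (k₂:ℝ)*(zw:ℝ)),
        sq_nonneg ((k₁:ℝ)*(yw:ℝ) - (k₂:ℝ)*(xw:ℝ))]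
    have h2 : ((k₀:ℝ)^2+(k₁:ℝ)^2+(k₂:ℝ)^2) * ((xw:ℝ)^2+(yw:ℝ)^2+(zw:ℝ)^2)
        ≤ ((k₀:ℝ)^2+(k₁:ℝ)^2+(k₂:ℝ)^2) * P := by
      apply mul_le_mul_of_nonneg_left _ (by positivity)
      linarith
    rw [hKz']
    linarith
  have hWa : Wr ≤ 3 * a^2 * pF := by
    have hc2 : ((c:ℝ))^2 ≤ (a*pF)^2 := by
      have h1 : (Kz:ℝ) * P ≤ a^2 * pF^2 :=
        mul_le_mul hKa (le_refl P) (by positivity) (by positivity)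
      nlinarith
    have hcle : (c:ℝ) ≤ a*pF := le_of_sq_le_sq' hc2 (by positivity)
    have ha2 : a^2 ≤ a^2 * pF := by nlinarith
    have hap : a * pF ≤ a^2 * pF := by nlinarith
    rw [hWr]
    linarith [hKa]
  -- real parameters
  set κ : ℝ := (k₀:ℝ)^2 with hκdef
  set κ₂ : ℝ := κ + (k₂:ℝ)^2 with hκ₂def
  set α : ℝ := κ₂/κ with hαdef
  have hκ1 : (1:ℝ) ≤ κ := by
    have h1 : (1:ℤ) ≤ k₀^2 := by rcases hk₀.lt_or_gt with h|h <;> nlinarith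
    rw [hκdef]; exact_mod_cast h1
  have hκ₂1 : (1:ℝ) ≤ κ₂ := by nlinarith [sq_nonneg ((k₂:ℝ))]
  have hκ0 : κ ≠ 0 := by linarith
  have hκ₂0 : κ₂ ≠ 0 := by linarith
  have hα1 : (1:ℝ) ≤ α := by
    rw [hαdef, le_div_iff₀ (by linarith : (0:ℝ) < κ)]
    nlinarith [sq_nonneg ((k₂:ℝ))]
  have hα0 : (0:ℝ) < α := by linarith
  have hKκ₂ : κ₂ ≤ (Kz:ℝ) := by
    rw [hκ₂def, hκdef, hKz]; push_cast; nlinarith [sq_nonneg ((k₁:ℝ))]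
  set δ : ℝ := (Kz:ℝ)/κ₂ with hδdef
  have hδ1 : (1:ℝ) ≤ δ := by
    rw [hδdef, le_div_iff₀ (by linarith : (0:ℝ) < κ₂)]; linarith
  have hδ0 : (0:ℝ) ≤ δ := by linarith
  set e : ℝ := (c:ℝ)^2/(Kz:ℝ) with hedef
  set x₀ : ℝ := (k₁:ℝ)*(c:ℝ)/(Kz:ℝ) with hx₀def
  have heP : e ≤ P := by
    rw [hedef, div_le_iff₀ (by linarith : (0:ℝ) < (Kz:ℝ))]
    nlinarith
  set R : ℝ := Real.sqrt (P - e) with hRdef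
  have hR0 : 0 ≤ R := Real.sqrt_nonneg _
  have hR2 : R^2 = P - e := Real.sq_sqrt (by linarith)
  set sδ : ℝ := Real.sqrt δ with hsδdef
  have hsδ1 : (1:ℝ) ≤ sδ := by
    rw [hsδdef]
    nlinarith [Real.sq_sqrt hδ0, Real.sqrt_nonneg δ]
  have hsδ2 : sδ^2 = δ := Real.sq_sqrt hδ0
  set D : ℝ := R / sδ with hDdef
  have hsδD : sδ * D = R := by rw [hDdef]; field_simp
  have hDR : D ≤ R := by
    rw [hDdef, div_le_iff₀ (by linarith : (0:ℝ) < sδ)]; nlinarith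
  have hD0 : 0 ≤ D := by rw [hDdef]; positivity
  -- the quadratic in x
  set μ : ℤ → ℝ := fun x => (x:ℝ)^2 + ((c:ℝ) - (k₁:ℝ)*(x:ℝ))^2/κ₂ with hμdef
  have hKz0 : (Kz:ℝ) ≠ 0 := by linarith
  have hμid : ∀ x : ℤ, μ x = e + δ*((x:ℝ) - x₀)^2 := by
    intro x
    rw [hμdef, hedef, hδdef, hx₀def]
    have hKexp : (Kz:ℝ) = κ₂ + (k₁:ℝ)^2 := by
      rw [hκ₂def, hκdef, hKz]; push_cast; ring
    field_simp
    rw [hKexp]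
    ring
  have hμe : ∀ x : ℤ, e ≤ μ x := by
    intro x
    rw [hμid x]
    have h9 := mul_nonneg hδ0 (sq_nonneg ((x:ℝ) - x₀))
    linarith only [h9]
  set y₀ : ℤ → ℝ := fun x => (k₂:ℝ)*((c:ℝ) - (k₁:ℝ)*(x:ℝ))/κ₂ with hy₀def
  set tt : ℤ → ℝ := fun x => Real.sqrt ((P - μ x)/α) with httdef
  set ss : ℤ → ℝ := fun x => Real.sqrt ((P - Wr - μ x)/α) with hssdef
  set f : ℤ → ℝ := fun x => tt x - ss x with hfdef
  have htt0 : ∀ x, 0 ≤ tt x := fun x => Real.sqrt_nonneg _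
  have hss0 : ∀ x, 0 ≤ ss x := fun x => Real.sqrt_nonneg _
  have hts : ∀ x, ss x ≤ tt x := by
    intro x
    exact Real.sqrt_le_sqrt ((div_le_div_iff_of_pos_right hα0).mpr (by linarith))
  have hf0 : ∀ x, 0 ≤ f x := by
    intro x
    have := hts x
    show 0 ≤ tt x - ss x
    linarith
  have hfW : ∀ x : ℤ, f x ≤ Real.sqrt Wr := by
    intro x
    show tt x - ss x ≤ Real.sqrt Wr
    have harg : (P - Wr - μ x)/α = (P - μ x)/α - Wr/α := by ring
    show Real.sqrt ((P - μ x)/α) - Real.sqrt ((P - Wr - μ x)/α) ≤ Real.sqrt Wr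
    rw [harg]
    exact sqrt_window _ _ _ (div_nonneg hW0 (le_of_lt hα0)) (div_le_self hW0 hα1)
  have hfar : ∀ x : ℤ, P < μ x → f x = 0 := by
    intro x hx
    show Real.sqrt ((P - μ x)/α) - Real.sqrt ((P - Wr - μ x)/α) = 0
    rw [Real.sqrt_eq_zero_of_nonpos, Real.sqrt_eq_zero_of_nonpos]
    · ring
    · apply div_nonpos_of_nonpos_of_nonneg _ (le_of_lt hα0); linarith
    · apply div_nonpos_of_nonpos_of_nonneg _ (le_of_lt hα0); linarith
  have hvD : ∀ x : ℤ, μ x ≤ P → |(x:ℝ) - x₀| ≤ D := by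
    intro x hx
    have h1 : δ * ((x:ℝ) - x₀)^2 ≤ R^2 := by
      rw [hμid x] at hx; linarith [hR2]
    have h2 : (sδ * |(x:ℝ) - x₀|)^2 ≤ R^2 := by
      rw [mul_pow, sq_abs]
      have e2 : sδ^2*((x:ℝ)-x₀)^2 = δ*((x:ℝ)-x₀)^2 := by rw [hsδ2]
      linarith only [e2, h1]
    have h3 : sδ * |(x:ℝ) - x₀| ≤ R := le_of_sq_le_sq' h2 hR0
    have h4 : sδ * |(x:ℝ) - x₀| ≤ sδ * D := by linarith [hsδD]
    exact (mul_le_mul_iff_right₀ (by linarith : (0:ℝ) < sδ)).mp h4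
  have hf2good : ∀ x : ℤ, μ x ≤ P - Wr → ∀ dr : ℝ, 1 ≤ dr →
      dr ≤ D - |(x:ℝ) - x₀| → f x ≤ (Wr/Real.sqrt R) * (1/Real.sqrt dr) := by
    intro x hgx dr hdr1 hdrD
    have hw0 : 0 ≤ |(x:ℝ) - x₀| := abs_nonneg _
    have hwD : |(x:ℝ) - x₀| ≤ D := by linarith
    have hgexp : P - μ x = R^2 - δ*|(x:ℝ) - x₀|^2 := by
      rw [hμid x, sq_abs]; linarith [hR2]
    have hsδw : sδ * |(x:ℝ) - x₀| ≤ R - dr := by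
      have h1 : (sδ - 1) * |(x:ℝ) - x₀| ≤ (sδ - 1) * D :=
        mul_le_mul_of_nonneg_left hwD (by linarith)
      linarith [hsδD]
    have hsδw0 : 0 ≤ sδ * |(x:ℝ) - x₀| := mul_nonneg (by linarith) hw0
    have hR1' : (1:ℝ) ≤ R := by linarith
    have hgW : Wr ≤ P - μ x := by linarith
    have hgRdr : R * dr ≤ P - μ x := by
      have hfact : P - μ x = (R - sδ*|(x:ℝ) - x₀|)*(R + sδ*|(x:ℝ) - x₀|) := by
        rw [hgexp, ← hsδ2]; ring
      have h1 : dr ≤ R - sδ*|(x:ℝ) - x₀| := by linarith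
      have h2 : R ≤ R + sδ*|(x:ℝ) - x₀| := by linarith
      calc R * dr = dr * R := by ring
        _ ≤ (R - sδ*|(x:ℝ) - x₀|)*(R + sδ*|(x:ℝ) - x₀|) :=
          mul_le_mul h1 h2 hR0 (by linarith)
        _ = P - μ x := hfact.symm
    have hgp := good_pt (P - μ x) α Wr R dr hα1 (by linarith) hgW (by linarith)
      (by linarith) hgRdr
    show Real.sqrt ((P - μ x)/α) - Real.sqrt ((P - Wr - μ x)/α) ≤ (Wr/Real.sqrt R) * (1/Real.sqrt dr)
    have harg : (P - Wr - μ x) = (P - μ x) - Wr := by ring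
    rw [harg]
    exact hgp
  -- cardinality of B
  have hcardB : ((B.card : ℕ) : ℝ) ≤ 2*pF + 1 := by
    rw [hB]
    have h1 := int_card_le (show -pF ≤ pF by linarith)
    linarith
  -- fiberwise decomposition
  have hcards : G.card = ∑ x ∈ B, (G.filter (fun p => p.1 = x)).card := by
    apply Finset.card_eq_sum_card_fiberwise
    intro p hp
    rw [hG] at hp
    exact (Finset.mem_product.mp (Finset.mem_filter.mp hp).1).1
  have hfiber : ∀ x ∈ B, ((G.filter (fun p => p.1 = x)).card : ℝ) ≤ 2 * f x + 2 := by
    intro x hx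
    set I₁ := Finset.Icc ⌈y₀ x - tt x⌉ ⌊y₀ x - ss x⌋ with hI₁
    set I₂ := Finset.Icc ⌈y₀ x + ss x⌉ ⌊y₀ x + tt x⌋ with hI₂
    have hmap : ∀ p ∈ G.filter (fun p => p.1 = x), p.2.1 ∈ I₁ ∪ I₂ := by
      intro p hp
      obtain ⟨hpG, hpx⟩ := Finset.mem_filter.mp hp
      have hcp : cond p := (Finset.mem_filter.mp (by rw [hG] at hpG; exact hpG)).2
      rw [hcond] at hcp
      obtain ⟨heq, hlo, hhi⟩ := hcp
      have hQ : ((p.1^2 + p.2.1^2 + p.2.2^2 : ℤ):ℝ)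
          = α*((p.2.1:ℝ) - y₀ p.1)^2 + μ p.1 := by
        have h0 := Qid k₀ k₁ k₂ c p.1 p.2.1 p.2.2 hk₀ heq
        simp only [hαdef, hκ₂def, hκdef, hy₀def, hμdef]
        exact h0
      rw [hpx] at hQ hlo hhi
      have h1 : α*(((p.2.1:ℝ)) - y₀ x)^2 ≤ P - μ x := by
        rw [hQ] at hhi; linarith
      have h2 : P - Wr - μ x < α*(((p.2.1:ℝ)) - y₀ x)^2 := by
        rw [hQ] at hlo; linarith
      have habs1 : |((p.2.1:ℝ)) - y₀ x| ≤ tt x := by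
        show |((p.2.1:ℝ)) - y₀ x| ≤ Real.sqrt ((P - μ x)/α)
        rw [← Real.sqrt_sq_eq_abs]
        apply Real.sqrt_le_sqrt
        rw [le_div_iff₀ hα0]
        linarith [h1]
      have habs2 : ss x ≤ |((p.2.1:ℝ)) - y₀ x| := by
        show Real.sqrt ((P - Wr - μ x)/α) ≤ |((p.2.1:ℝ)) - y₀ x|
        rw [← Real.sqrt_sq_eq_abs]
        apply Real.sqrt_le_sqrt
        rw [div_le_iff₀ hα0]
        linarith [h2]
      have hb1 := abs_le.mp habs1
      rcases le_abs'.mp habs2 with hcase | hcase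
      · apply Finset.mem_union_left
        rw [hI₁]
        apply mem_int_Icc
        · linarith [hb1.1]
        · linarith
      · apply Finset.mem_union_right
        rw [hI₂]
        apply mem_int_Icc
        · linarith
        · linarith [hb1.2]
    have hinj : Set.InjOn (fun p : ℤ×ℤ×ℤ => p.2.1) ↑(G.filter (fun p => p.1 = x)) := by
      intro p hp q hq hpq
      simp only [Finset.coe_filter, Set.mem_setOf_eq] at hp hq
      have hcp : cond p := (Finset.mem_filter.mp (by have := hp.1; rw [hG] at this; exact this)).2
      have hcq : cond q := (Finset.mem_filter.mp (by have := hq.1; rw [hG] at this; exact this)).2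
      rw [hcond] at hcp hcq
      have e1 : p.1 = q.1 := by rw [hp.2, hq.2]
      have e2 : p.2.1 = q.2.1 := hpq
      have e3 : p.2.2 = q.2.2 := by
        have h1 := hcp.1
        have h2 := hcq.1
        rw [e1, e2] at h1
        have : k₀ * p.2.2 = k₀ * q.2.2 := by linarith
        exact mul_left_cancel₀ hk₀ this
      exact Prod.ext e1 (Prod.ext e2 e3)
    have hle := Finset.card_le_card_of_injOn (fun p : ℤ×ℤ×ℤ => p.2.1) hmap hinj
    have hc1 : ((I₁.card : ℕ):ℝ) ≤ (tt x - ss x) + 1 := by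
      rw [hI₁]
      have h1 := int_card_le (show y₀ x - tt x ≤ y₀ x - ss x by linarith [hts x])
      linarith
    have hc2 : ((I₂.card : ℕ):ℝ) ≤ (tt x - ss x) + 1 := by
      rw [hI₂]
      have h1 := int_card_le (show y₀ x + ss x ≤ y₀ x + tt x by linarith [hts x])
      linarith
    have hcu : (((I₁ ∪ I₂).card : ℕ) : ℝ) ≤ ((I₁.card : ℕ):ℝ) + ((I₂.card : ℕ):ℝ) := by
      exact_mod_cast Finset.card_union_le I₁ I₂
    have hfx : f x = tt x - ss x := rfl
    calc ((G.filter (fun p => p.1 = x)).card : ℝ) ≤ (((I₁ ∪ I₂).card : ℕ) : ℝ) := by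
          exact_mod_cast hle
      _ ≤ 2 * f x + 2 := by rw [hfx] at *; linarith
  -- splitting B
  set Good := B.filter (fun x => μ x ≤ P - Wr) with hGood
  set Rest := B.filter (fun x => ¬ μ x ≤ P - Wr) with hRest
  set BadF := Rest.filter (fun x => μ x ≤ P) with hBadF
  set Far := Rest.filter (fun x => ¬ μ x ≤ P) with hFarF
  have hsplit : ∑ x ∈ B, f x = ∑ x ∈ Good, f x + (∑ x ∈ BadF, f x + ∑ x ∈ Far, f x) := by
    rw [hBadF, hFarF, hRest, hGood]
    rw [Finset.sum_filter_add_sum_filter_not (Finset.filter (fun x => ¬ μ x ≤ P - Wr) B) (fun x => μ x ≤ P) f]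
    rw [Finset.sum_filter_add_sum_filter_not B (fun x => μ x ≤ P - Wr) f]
  have hFarsum : ∑ x ∈ Far, f x = 0 := by
    apply Finset.sum_eq_zero
    intro x hx
    rw [hFarF] at hx
    have h1 := (Finset.mem_filter.mp hx).2
    push_neg at h1
    exact hfar x h1
  -- bad count
  set σ : ℝ := Real.sqrt (R^2 - Wr) with hσdef
  have hσ0 : 0 ≤ σ := Real.sqrt_nonneg _
  have hσR : σ ≤ R := by
    rw [hσdef]
    calc Real.sqrt (R^2 - Wr) ≤ Real.sqrt (R^2) := Real.sqrt_le_sqrt (by linarith only [hW0])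
      _ = R := Real.sqrt_sq hR0
  have hRσ : R - σ ≤ Real.sqrt Wr := by
    have h1 := sqrt_window (R^2) Wr Wr hW0 le_rfl
    rw [Real.sqrt_sq hR0] at h1
    rw [hσdef]
    exact h1
  have hsδpos : (0:ℝ) < sδ := by linarith only [hsδ1]
  have hσsδD : σ/sδ ≤ D := by
    rw [div_le_iff₀ hsδpos]
    calc σ ≤ R := hσR
      _ = sδ * D := hsδD.symm
      _ = D * sδ := by ring
  have hBadsum : ∑ x ∈ BadF, f x ≤ 2*Wr + 2*Real.sqrt Wr := by
    set J₁ := Finset.Icc ⌈x₀ + σ/sδ⌉ ⌊x₀ + D⌋ with hJ₁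
    set J₂ := Finset.Icc ⌈x₀ - D⌉ ⌊x₀ - σ/sδ⌋ with hJ₂
    have hmemb : ∀ x ∈ BadF, x ∈ J₁ ∪ J₂ := by
      intro x hx
      rw [hBadF] at hx
      obtain ⟨hxR, hxP⟩ := Finset.mem_filter.mp hx
      rw [hRest] at hxR
      have hxlo := (Finset.mem_filter.mp hxR).2
      push_neg at hxlo
      have hD1 : |(x:ℝ) - x₀| ≤ D := hvD x hxP
      have hdn : R^2 - Wr < δ * ((x:ℝ) - x₀)^2 := by
        rw [hμid x] at hxlo
        linarith only [hxlo, hR2]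
      have hσv : σ ≤ sδ * |(x:ℝ) - x₀| := by
        rcases le_or_gt (R^2 - Wr) 0 with hns | hns
        · rw [hσdef, Real.sqrt_eq_zero_of_nonpos hns]
          exact mul_nonneg (by linarith only [hsδ1]) (abs_nonneg _)
        · have hσ2 : σ^2 = R^2 - Wr := by rw [hσdef]; exact Real.sq_sqrt (by linarith only [hns])
          apply le_of_sq_le_sq' _ (mul_nonneg (by linarith only [hsδ1]) (abs_nonneg _))
          rw [mul_pow, sq_abs]
          have he2 : sδ^2*((x:ℝ)-x₀)^2 = δ*((x:ℝ)-x₀)^2 := by rw [hsδ2]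
          linarith only [hσ2, hdn, he2]
      have hσsv : σ/sδ ≤ |(x:ℝ) - x₀| := by
        rw [div_le_iff₀ hsδpos]
        calc σ ≤ sδ * |(x:ℝ) - x₀| := hσv
          _ = |(x:ℝ) - x₀| * sδ := by ring
      rcases le_or_gt x₀ ((x:ℝ)) with hside | hside
      · apply Finset.mem_union_left
        rw [hJ₁]
        have habs : |(x:ℝ) - x₀| = (x:ℝ) - x₀ := abs_of_nonneg (by linarith only [hside])
        rw [habs] at hσsv hD1
        apply mem_int_Icc (by linarith only [hσsv]) (by linarith only [hD1])
      · apply Finset.mem_union_right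
        rw [hJ₂]
        have habs : |(x:ℝ) - x₀| = -((x:ℝ) - x₀) := abs_of_neg (by linarith only [hside])
        rw [habs] at hσsv hD1
        apply mem_int_Icc (by linarith only [hD1]) (by linarith only [hσsv])
    have hDσsδ : D - σ/sδ ≤ Real.sqrt Wr := by
      have h1 : D - σ/sδ = (R - σ)/sδ := by
        rw [hDdef]; field_simp
      rw [h1]
      calc (R - σ)/sδ ≤ (R - σ)/1 := by
            apply div_le_div_of_nonneg_left (by linarith only [hσR]) one_pos hsδ1
        _ = R - σ := by ring
        _ ≤ Real.sqrt Wr := hRσ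
    have hcJ₁ : ((J₁.card : ℕ):ℝ) ≤ Real.sqrt Wr + 1 := by
      rw [hJ₁]
      have h1 := int_card_le (show x₀ + σ/sδ ≤ x₀ + D by linarith only [hσsδD])
      linarith only [h1, hDσsδ]
    have hcJ₂ : ((J₂.card : ℕ):ℝ) ≤ Real.sqrt Wr + 1 := by
      rw [hJ₂]
      have h1 := int_card_le (show x₀ - D ≤ x₀ - σ/sδ by linarith only [hσsδD])
      linarith only [h1, hDσsδ]
    have hcard : ((BadF.card : ℕ):ℝ) ≤ 2*Real.sqrt Wr + 2 := by
      have h2 : BadF.card ≤ (J₁ ∪ J₂).card := Finset.card_le_card hmemb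
      have h3 : (J₁ ∪ J₂).card ≤ J₁.card + J₂.card := Finset.card_union_le _ _
      have h4 : ((BadF.card : ℕ):ℝ) ≤ ((J₁.card : ℕ):ℝ) + ((J₂.card : ℕ):ℝ) := by
        exact_mod_cast le_trans h2 h3
      linarith only [h4, hcJ₁, hcJ₂]
    have h5 : ∑ x ∈ BadF, f x ≤ BadF.card • Real.sqrt Wr :=
      Finset.sum_le_card_nsmul _ _ _ (fun x _ => hfW x)
    rw [nsmul_eq_mul] at h5
    have h6 : (BadF.card : ℝ) * Real.sqrt Wr ≤ (2*Real.sqrt Wr + 2) * Real.sqrt Wr :=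
      mul_le_mul_of_nonneg_right hcard hsW0
    have h7 : (2*Real.sqrt Wr + 2) * Real.sqrt Wr = 2*(Real.sqrt Wr)^2 + 2*Real.sqrt Wr := by ring
    have h8 : (Real.sqrt Wr)^2 = Wr := Real.sq_sqrt hW0
    linarith only [h5, h6, h7, h8]
  -- good sum
  have hGoodsum : ∑ x ∈ Good, f x ≤ 2*Real.sqrt Wr + 6*Wr := by
    rcases Finset.eq_empty_or_nonempty Good with hGe | ⟨xg, hxg⟩
    · rw [hGe]
      simp only [Finset.sum_empty]
      linarith only [hsW0, hW1]
    have hxgood : μ xg ≤ P - Wr := by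
      rw [hGood] at hxg
      exact (Finset.mem_filter.mp hxg).2
    have hR1 : (1:ℝ) ≤ R := by
      have h1 := hμe xg
      have h2 : (1:ℝ) ≤ R^2 := by linarith only [hR2, h1, hW1, hxgood]
      exact le_of_sq_le_sq' (by rw [one_pow]; exact h2) hR0
    set GR := Good.filter (fun x : ℤ => x₀ ≤ (x:ℝ)) with hGR
    set Glf := Good.filter (fun x : ℤ => ¬ x₀ ≤ (x:ℝ)) with hGlf
    have hGRsum : ∑ x ∈ GR, f x ≤ Real.sqrt Wr + 3*Wr := by
      apply side_sum GR f R Wr ⌊x₀ + D⌋ hR1 hW0 (fun x _ => hf0 x) (fun x _ => hfW x)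
      · intro x hx
        rw [hGR] at hx
        obtain ⟨hxG, hxs⟩ := Finset.mem_filter.mp hx
        have hg : μ x ≤ P - Wr := by rw [hGood] at hxG; exact (Finset.mem_filter.mp hxG).2
        have hD1 : |(x:ℝ) - x₀| ≤ D := hvD x (by linarith only [hg, hW0])
        rw [abs_of_nonneg (by linarith only [hxs] : (0:ℝ) ≤ (x:ℝ) - x₀)] at hD1
        rw [Int.le_floor]
        linarith only [hD1, hxs]
      · intro x hx
        rw [hGR] at hx
        obtain ⟨hxG, hxs⟩ := Finset.mem_filter.mp hx
        have hfl : ((⌊x₀ + D⌋ : ℤ):ℝ) ≤ x₀ + D := Int.floor_le _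
        push_cast
        linarith only [hfl, hxs, hDR]
      · intro x hx hne
        rw [hGR] at hx
        obtain ⟨hxG, hxs⟩ := Finset.mem_filter.mp hx
        have hg : μ x ≤ P - Wr := by rw [hGood] at hxG; exact (Finset.mem_filter.mp hxG).2
        have hD1 : |(x:ℝ) - x₀| ≤ D := hvD x (by linarith only [hg, hW0])
        have habs : |(x:ℝ) - x₀| = (x:ℝ) - x₀ := abs_of_nonneg (by linarith only [hxs])
        have hxle : x ≤ ⌊x₀ + D⌋ := by
          rw [Int.le_floor]
          rw [habs] at hD1
          linarith only [hD1]
        have hxlt : x < ⌊x₀ + D⌋ := lt_of_le_of_ne hxle hne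
        have hdr1 : (1:ℝ) ≤ ((⌊x₀ + D⌋ - x : ℤ):ℝ) := by
          have h9 : (1:ℤ) ≤ ⌊x₀ + D⌋ - x := by omega
          exact_mod_cast h9
        apply hf2good x hg _ hdr1
        have hfl : ((⌊x₀ + D⌋ : ℤ):ℝ) ≤ x₀ + D := Int.floor_le _
        rw [habs]
        push_cast
        linarith only [hfl]
    have hGlfsum : ∑ x ∈ Glf, f x ≤ Real.sqrt Wr + 3*Wr := by
      have himg : ∑ x ∈ Glf, f x = ∑ t ∈ Glf.image (fun t : ℤ => -t), f (-t) := by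
        rw [Finset.sum_image (by intro x _ y _ h; exact neg_inj.mp h)]
        simp
      rw [himg]
      apply side_sum (Glf.image (fun t : ℤ => -t)) (fun t => f (-t)) R Wr ⌊D - x₀⌋ hR1 hW0
      · intro t ht
        exact hf0 _
      · intro t ht
        exact hfW _
      · intro t ht
        obtain ⟨x, hx, rfl⟩ := Finset.mem_image.mp ht
        rw [hGlf] at hx
        obtain ⟨hxG, hxs⟩ := Finset.mem_filter.mp hx
        have hg : μ x ≤ P - Wr := by rw [hGood] at hxG; exact (Finset.mem_filter.mp hxG).2
        have hD1 : |(x:ℝ) - x₀| ≤ D := hvD x (by linarith only [hg, hW0])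
        push_neg at hxs
        rw [abs_of_neg (by linarith only [hxs] : (x:ℝ) - x₀ < 0)] at hD1
        rw [Int.le_floor]
        push_cast
        linarith only [hD1]
      · intro t ht
        obtain ⟨x, hx, rfl⟩ := Finset.mem_image.mp ht
        rw [hGlf] at hx
        obtain ⟨hxG, hxs⟩ := Finset.mem_filter.mp hx
        push_neg at hxs
        have hfl : ((⌊D - x₀⌋ : ℤ):ℝ) ≤ D - x₀ := Int.floor_le _
        push_cast
        linarith only [hfl, hxs, hDR]
      · intro t ht hne
        obtain ⟨x, hx, rfl⟩ := Finset.mem_image.mp ht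
        rw [hGlf] at hx
        obtain ⟨hxG, hxs⟩ := Finset.mem_filter.mp hx
        have hg : μ x ≤ P - Wr := by rw [hGood] at hxG; exact (Finset.mem_filter.mp hxG).2
        have hD1 : |(x:ℝ) - x₀| ≤ D := hvD x (by linarith only [hg, hW0])
        push_neg at hxs
        have habs : |(x:ℝ) - x₀| = -((x:ℝ) - x₀) := abs_of_neg (by linarith only [hxs])
        have hxle : -x ≤ ⌊D - x₀⌋ := by
          rw [Int.le_floor]
          rw [habs] at hD1
          push_cast
          linarith only [hD1]
        have hxlt : -x < ⌊D - x₀⌋ := lt_of_le_of_ne hxle hne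
        have hdr1 : (1:ℝ) ≤ ((⌊D - x₀⌋ - -x : ℤ):ℝ) := by
          have h9 : (1:ℤ) ≤ ⌊D - x₀⌋ - -x := by omega
          exact_mod_cast h9
        have hgoal := hf2good x hg ((⌊D - x₀⌋ - -x : ℤ):ℝ) hdr1 (by
          have hfl : ((⌊D - x₀⌋ : ℤ):ℝ) ≤ D - x₀ := Int.floor_le _
          rw [habs] at hD1 ⊢
          push_cast
          linarith only [hfl, hD1])
        have hnn : -(-x) = x := by ring
        simpa [hnn] using hgoal
    have hsplitG : ∑ x ∈ Good, f x = ∑ x ∈ GR, f x + ∑ x ∈ Glf, f x := by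
      rw [hGR, hGlf, Finset.sum_filter_add_sum_filter_not]
    rw [hsplitG]
    linarith only [hGRsum, hGlfsum]
  -- final assembly
  have htotal : (G.card : ℝ) ≤ 2 * (∑ x ∈ B, f x) + 2 * ((B.card : ℕ):ℝ) := by
    rw [hcards]
    push_cast
    calc ∑ x ∈ B, ((Finset.filter (fun p => p.1 = x) G).card : ℝ)
        ≤ ∑ x ∈ B, (2 * f x + 2) := Finset.sum_le_sum hfiber
      _ = 2 * (∑ x ∈ B, f x) + 2 * ((B.card : ℕ):ℝ) := by
          rw [Finset.sum_add_distrib, ← Finset.mul_sum, Finset.sum_const, nsmul_eq_mul]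
          ring
  have hfsum : ∑ x ∈ B, f x ≤ 4*Real.sqrt Wr + 8*Wr := by
    rw [hsplit, hFarsum]
    linarith only [hGoodsum, hBadsum]
  have ha2' : (1:ℝ) ≤ a^2 := one_le_sq_aux ha
  have hpFa : pF ≤ a^2 * pF := by
    have h9 : (a^2 - 1) * pF ≥ 0 := mul_nonneg (by linarith only [ha2']) (by linarith only [hpF])
    linarith only [h9]
  have haP1 : (1:ℝ) ≤ a^2*pF := by
    have h9 : (a^2) * 1 ≤ a^2 * pF := mul_le_mul_of_nonneg_left hpF (by linarith only [ha2'])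
    linarith only [h9, ha2']
  calc (G.card : ℝ) ≤ 2 * (∑ x ∈ B, f x) + 2 * ((B.card : ℕ):ℝ) := htotal
    _ ≤ 2 * (4*Real.sqrt Wr + 8*Wr) + 2 * (2*pF + 1) := by
        linarith only [hfsum, hcardB]
    _ ≤ 24 * Wr + 4*pF + 2 := by linarith only [hsW1]
    _ ≤ 24 * (3*a^2*pF) + 4*(a^2*pF) + 2*(a^2*pF) := by
        linarith only [hpFa, hWa, haP1]
    _ ≤ 100 * a^2 * pF := by linarith only [haP1]

lemma cyclic_sum {M : Type*} [AddCommMonoid M] (j : Fin 3) (g : Fin 3 → M) :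
    ∑ i, g i = g j + g (j + 1) + g (j + 2) := by
  fin_cases j <;> simp [Fin.sum_univ_three] <;> abel

lemma fin3_cases (i j : Fin 3) : i = j ∨ i = j + 1 ∨ i = j + 2 := by
  fin_cases i <;> fin_cases j <;> decide

/-- The Euclidean norm of a lattice point in `ℤ^d`. -/
noncomputable def zNorm {d : ℕ} (p : Fin d → ℤ) : ℝ := Real.sqrt (∑ i, ((p i : ℝ)) ^ 2)

/-- The counting function `N(q, k)`: the number of `r ∈ ℤ³` with `|r| ≤ p_F`,
`|r + k| > p_F` and `r·k = q·k`. -/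
noncomputable def latticeCount (pF : ℝ) (q k : Fin 3 → ℤ) : ℕ :=
  Set.ncard {r : Fin 3 → ℤ |
    zNorm r ≤ pF ∧ pF < zNorm (r + k) ∧ (∑ i, r i * k i) = ∑ i, q i * k i}

/-- For every `a ≥ 1` there is a constant `C > 0` such that for every `p_F ≥ 1`, every
`k ∈ ℤ³` with `1 ≤ |k| ≤ a`, and every `q ∈ ℤ³`, one has `N(q,k) ≤ C·p_F`. -/
theorem stmt6 (a : ℝ) (ha : 1 ≤ a) :
    ∃ C : ℝ, 0 < C ∧ ∀ pF : ℝ, 1 ≤ pF → ∀ k : Fin 3 → ℤ, 1 ≤ zNorm k → zNorm k ≤ a →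
      ∀ q : Fin 3 → ℤ, (latticeCount pF q k : ℝ) ≤ C * pF := by
  refine ⟨100 * a^2, by positivity, ?_⟩
  intro pF hpF k hk1 hka q
  have hpF0 : (0:ℝ) < pF := by linarith
  have ha0 : (0:ℝ) < a := by linarith
  -- norm facts for k
  have hsum1 : (1:ℝ) ≤ ∑ i, ((k i : ℝ))^2 := by
    by_contra hcon
    push_neg at hcon
    have h2 : zNorm k < 1 := by
      have := Real.sqrt_lt_sqrt (by positivity) hcon
      rw [Real.sqrt_one] at this
      exact this
    linarith
  have hsuma : ∑ i, ((k i : ℝ))^2 ≤ a^2 := by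
    have h1 : zNorm k ≤ a := hka
    rw [zNorm, Real.sqrt_le_left (by linarith)] at h1
    exact h1
  have hjex : ∃ j : Fin 3, k j ≠ 0 := by
    by_contra hcon
    push_neg at hcon
    have : ∑ i, ((k i : ℝ))^2 = 0 := by
      apply Finset.sum_eq_zero
      intro i _
      rw [hcon i]
      norm_num
    linarith
  obtain ⟨j, hj⟩ := hjex
  set c : ℤ := ∑ i, q i * k i with hc
  have hKsum : ((k j)^2 + (k (j+1))^2 + (k (j+2))^2 : ℤ) = ∑ i, (k i)^2 := by
    rw [cyclic_sum j (fun i => (k i)^2)]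
  have hKcast : ((∑ i, (k i)^2 : ℤ) : ℝ) = ∑ i, ((k i:ℝ))^2 := by
    push_cast
    rfl
  have hKa : (((k j)^2 + (k (j+1))^2 + (k (j+2))^2 : ℤ) : ℝ) ≤ a^2 := by
    rw [hKsum, hKcast]
    exact hsuma
  obtain ⟨G, hsub, hcard⟩ := core_count a pF ha hpF (k j) (k (j+1)) (k (j+2)) c hj hKa
  -- the injection
  set S : Set (Fin 3 → ℤ) := {r : Fin 3 → ℤ |
    zNorm r ≤ pF ∧ pF < zNorm (r + k) ∧ (∑ i, r i * k i) = ∑ i, q i * k i} with hS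
  set φ : (Fin 3 → ℤ) → ℤ × ℤ × ℤ := fun r => (r (j+1), r (j+2), r j) with hφ
  have hmaps : ∀ r ∈ S, φ r ∈ (↑G : Set (ℤ × ℤ × ℤ)) := by
    intro r hr
    obtain ⟨hr1, hr2, hr3⟩ := hr
    apply hsub
    simp only [Set.mem_setOf_eq, hφ]
    have hrsum : ∑ i, r i * k i = r j * k j + r (j+1) * k (j+1) + r (j+2) * k (j+2) :=
      cyclic_sum j (fun i => r i * k i)
    have hQsum : ((r (j+1))^2 + (r (j+2))^2 + (r j)^2 : ℤ) = ∑ i, (r i)^2 := by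
      rw [cyclic_sum j (fun i => (r i)^2)]
      ring
    have hQcast : ((∑ i, (r i)^2 : ℤ) : ℝ) = ∑ i, ((r i:ℝ))^2 := by
      push_cast
      rfl
    have hQle : ((∑ i, (r i)^2 : ℤ) : ℝ) ≤ pF^2 := by
      rw [hQcast]
      rw [zNorm, Real.sqrt_le_left (by linarith)] at hr1
      exact hr1
    have hlow : pF^2 < ∑ i, ((r i:ℝ) + (k i:ℝ))^2 := by
      rw [zNorm] at hr2
      rw [Real.lt_sqrt (by linarith)] at hr2
      calc pF^2 < ∑ i, (((r + k) i : ℝ))^2 := hr2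
        _ = ∑ i, ((r i:ℝ) + (k i:ℝ))^2 := by
            apply Finset.sum_congr rfl
            intro i _
            simp [Pi.add_apply]
    have hexp : ∑ i, ((r i:ℝ) + (k i:ℝ))^2
        = ∑ i, ((r i:ℝ))^2 + 2*(∑ i, (r i:ℝ)*(k i:ℝ)) + ∑ i, ((k i:ℝ))^2 := by
      rw [Finset.mul_sum]
      rw [← Finset.sum_add_distrib, ← Finset.sum_add_distrib]
      apply Finset.sum_congr rfl
      intro i _
      ring
    have hccast : ((c : ℤ) : ℝ) = ∑ i, (r i:ℝ)*(k i:ℝ) := by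
      rw [hc, ← hr3]
      push_cast
      rfl
    refine ⟨?_, ?_, ?_⟩
    · linear_combination hr3 - hrsum - hc
    · rw [hQsum, hKsum]
      have hKcast2 : ((∑ i, (k i)^2 : ℤ) : ℝ) = ∑ i, ((k i:ℝ))^2 := hKcast
      linarith only [hlow, hexp, hccast, hQcast, hKcast2]
    · rw [hQsum]
      exact hQle
  have hinj : Set.InjOn φ S := by
    intro r hr r' hr' heq
    simp only [hφ, Prod.mk.injEq] at heq
    obtain ⟨h1, h2, h3⟩ := heq
    funext i
    rcases fin3_cases i j with h | h | h
    · rw [h]; exact h3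
    · rw [h]; exact h1
    · rw [h]; exact h2
  have hle : S.ncard ≤ (↑G : Set (ℤ×ℤ×ℤ)).ncard :=
    Set.ncard_le_ncard_of_injOn φ hmaps hinj G.finite_toSet
  rw [Set.ncard_coe_finset] at hle
  have heq1 : latticeCount pF q k = S.ncard := by
    rw [latticeCount, hS]
  calc (latticeCount pF q k : ℝ) = (S.ncard : ℝ) := by rw [heq1]
    _ ≤ (G.card : ℝ) := by exact_mod_cast hle
    _ ≤ 100 * a^2 * pF := hcard
end

section
/- Let r ≥ 1 and let V̂ : ℤ³ → ℝ satisfy V̂(k) = 0 for |k| > r, V̂(−k) = V̂(k), and V̂(0) = 0. There exists a constant C > 0, depending only on r and ∑_{k∈ℤ³} V̂(k)², such that for every p_F ≥ 1 and every bounded function f : ℤ³ → ℝ, sup_{q∈ℤ³} |𝓑[f](q)| ≤ C·p_F·(sup_{p∈ℤ³}|f(p)|)·(sup_{p∈ℤ³}|1 − f(p)|). -/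
open Real

/-- The indicator `χ` of the Fermi ball of radius `p_F`. -/
noncomputable def chi {d : ℕ} (pF : ℝ) (p : Fin d → ℤ) : ℝ := if zNorm p ≤ pF then 1 else 0

/-- The indicator `χ^⊥ = 1 − χ` of the complement of the Fermi ball. -/
noncomputable def chiP {d : ℕ} (pF : ℝ) (p : Fin d → ℤ) : ℝ := 1 - chi pF p

/-- The limiting coefficient `α^H(h,k)` for holes. -/
noncomputable def alphaH (pF : ℝ) (h k : Fin 3 → ℤ) : ℝ :=
  (1 / (2 * π)) * chi pF h * chi pF (h + k) * ((2 * π) ^ 3)⁻¹ *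
    ∑' r : Fin 3 → ℤ, chi pF r * chiP pF (r + k) *
      (if (∑ i, r i * k i) = ∑ i, h i * k i then 1 else 0)

/-- The limiting coefficient `α^P(p,k)` for particles. -/
noncomputable def alphaP (pF : ℝ) (p k : Fin 3 → ℤ) : ℝ :=
  (1 / (2 * π)) * chiP pF p * chiP pF (p - k) * ((2 * π) ^ 3)⁻¹ *
    ∑' r : Fin 3 → ℤ, chi pF r * chiP pF (r + k) *
      (if (∑ i, r i * k i) = ∑ i, (p i - k i) * k i then 1 else 0)

/-- The limiting bosonized-interaction operator `𝓑`. -/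
noncomputable def Bop (pF : ℝ) (Vh f : (Fin 3 → ℤ) → ℝ) (q : Fin 3 → ℤ) : ℝ :=
  2 * π * ((2 * π) ^ 3)⁻¹ * ∑' k : Fin 3 → ℤ, (Vh k) ^ 2 *
    (alphaH pF (q - k) k * f (q - k) * (1 - f q)
      - alphaH pF q k * f q * (1 - f (q + k))
      + alphaP pF (q + k) k * f (q + k) * (1 - f q)
      - alphaP pF q k * f q * (1 - f (q - k)))

section Aux8helper
namespace Aux8
open MeasureTheory
open scoped ENNReal


lemma zNorm_nonneg {d : ℕ} (p : Fin d → ℤ) : 0 ≤ zNorm p := Real.sqrt_nonneg _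

lemma zNorm_sq {d : ℕ} (p : Fin d → ℤ) : zNorm p ^ 2 = ∑ i, ((p i : ℝ)) ^ 2 :=
  Real.sq_sqrt (by positivity)

lemma abs_coord_le {d : ℕ} (p : Fin d → ℤ) (i : Fin d) : |((p i : ℝ))| ≤ zNorm p := by
  rw [← Real.sqrt_sq_eq_abs, zNorm]
  exact Real.sqrt_le_sqrt (Finset.single_le_sum (f := fun j => ((p j : ℝ))^2)
    (fun j _ => by positivity) (Finset.mem_univ i))

lemma one_le_zNorm {d : ℕ} {k : Fin d → ℤ} (hk : k ≠ 0) : 1 ≤ zNorm k := by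
  obtain ⟨i, hi⟩ := Function.ne_iff.mp hk
  have h1 : (1 : ℝ) ≤ ((k i : ℝ))^2 := by
    have : (1 : ℤ) ≤ (k i)^2 := by
      rcases lt_trichotomy (k i) 0 with h | h | h
      · nlinarith
      · exact absurd h hi
      · nlinarith
    exact_mod_cast this
  calc (1:ℝ) = Real.sqrt 1 := (Real.sqrt_one).symm
  _ ≤ zNorm k := Real.sqrt_le_sqrt (le_trans h1 (Finset.single_le_sum
      (f := fun j => ((k j : ℝ))^2) (fun j _ => by positivity) (Finset.mem_univ i)))

noncomputable def box (R : ℝ) : Finset (Fin 3 → ℤ) :=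
  Finset.Icc (fun _ => -⌈R⌉) (fun _ => ⌈R⌉)

lemma mem_box {R : ℝ} {p : Fin 3 → ℤ} (h : zNorm p ≤ R) : p ∈ box R := by
  rw [box, Finset.mem_Icc]
  constructor <;> intro i
  · have := (abs_le.mp ((abs_coord_le p i).trans h)).1
    have h2 : (-⌈R⌉ : ℝ) ≤ (p i : ℝ) := le_trans (by simpa using neg_le_neg (Int.le_ceil R)) this
    exact_mod_cast h2
  · have := (abs_le.mp ((abs_coord_le p i).trans h)).2
    have h2 : ((p i : ℝ)) ≤ (⌈R⌉ : ℝ) := le_trans this (Int.le_ceil R)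
    exact_mod_cast h2

open Classical in
noncomputable def cset (pF : ℝ) (k : Fin 3 → ℤ) (c : ℤ) : Finset (Fin 3 → ℤ) :=
  (box pF).filter (fun r => zNorm r ≤ pF ∧ ¬ (zNorm (r + k) ≤ pF) ∧ (∑ i, r i * k i) = c)

lemma chi_nonneg {d : ℕ} (pF : ℝ) (p : Fin d → ℤ) : 0 ≤ chi pF p := by
  rw [chi]; split <;> norm_num

lemma chi_le_one {d : ℕ} (pF : ℝ) (p : Fin d → ℤ) : chi pF p ≤ 1 := by
  rw [chi]; split <;> norm_num

lemma chiP_nonneg {d : ℕ} (pF : ℝ) (p : Fin d → ℤ) : 0 ≤ chiP pF p := by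
  rw [chiP, chi]; split <;> norm_num

lemma chiP_le_one {d : ℕ} (pF : ℝ) (p : Fin d → ℤ) : chiP pF p ≤ 1 := by
  rw [chiP, chi]; split <;> norm_num

lemma inner_tsum_eq (pF : ℝ) (k : Fin 3 → ℤ) (c : ℤ) :
    (∑' r : Fin 3 → ℤ, chi pF r * chiP pF (r + k) *
      (if (∑ i, r i * k i) = c then 1 else 0)) = ((cset pF k c).card : ℝ) := by
  classical
  have h0 : ∀ r : Fin 3 → ℤ, chi pF r * chiP pF (r + k) *
      (if (∑ i, r i * k i) = c then (1:ℝ) else 0)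
      = if (zNorm r ≤ pF ∧ ¬ (zNorm (r + k) ≤ pF) ∧ (∑ i, r i * k i) = c) then (1:ℝ) else 0 := by
    intro r
    rw [chi, chiP, chi]
    split_ifs <;> simp_all <;> ring
  rw [tsum_congr h0]
  rw [tsum_eq_sum (s := cset pF k c) (by
    intro r hr
    by_cases hP : (zNorm r ≤ pF ∧ ¬ (zNorm (r + k) ≤ pF) ∧ (∑ i, r i * k i) = c)
    · exact absurd (Finset.mem_filter.mpr ⟨mem_box hP.1, hP⟩) hr
    · exact if_neg hP)]
  have hsum : (∑ b ∈ cset pF k c, if (zNorm b ≤ pF ∧ ¬ (zNorm (b + k) ≤ pF) ∧ (∑ i, b i * k i) = c) then (1:ℝ) else 0) = ∑ _b ∈ cset pF k c, (1:ℝ) :=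
    Finset.sum_congr rfl (fun r hr => by rw [if_pos (Finset.mem_filter.mp hr).2])
  rw [hsum, Finset.sum_const, nsmul_eq_mul, mul_one]

noncomputable def ι3 (r : Fin 3 → ℤ) : EuclideanSpace ℝ (Fin 3) := WithLp.toLp 2 (fun i => (r i : ℝ))

lemma norm_ι3 (r : Fin 3 → ℤ) : ‖ι3 r‖ = zNorm r := by
  rw [EuclideanSpace.norm_eq, zNorm]
  congr 1
  exact Finset.sum_congr rfl (fun i _ => by rw [Real.norm_eq_abs, sq_abs]; rfl)

noncomputable def cube (r : Fin 3 → ℤ) : Set (EuclideanSpace ℝ (Fin 3)) :=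
  (MeasurableEquiv.toLp 2 (Fin 3 → ℝ)).symm ⁻¹' (Set.univ.pi fun i => Set.Ico (r i : ℝ) (r i + 1))

lemma mem_cube {r : Fin 3 → ℤ} {x : EuclideanSpace ℝ (Fin 3)} :
    x ∈ cube r ↔ ∀ i, (r i : ℝ) ≤ x i ∧ x i < r i + 1 := by
  simp [cube, Set.mem_pi, Set.mem_Ico]

lemma cube_measurable (r : Fin 3 → ℤ) : MeasurableSet (cube r) :=
  (MeasurableEquiv.toLp 2 (Fin 3 → ℝ)).symm.measurable
    (MeasurableSet.univ_pi fun _ => measurableSet_Ico)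

lemma volume_cube (r : Fin 3 → ℤ) : volume (cube r) = 1 := by
  rw [cube, (EuclideanSpace.volume_preserving_symm_measurableEquiv_toLp (Fin 3)).measure_preimage
    ((MeasurableSet.univ_pi (fun _ => measurableSet_Ico)).nullMeasurableSet)]
  rw [volume_pi_pi]
  simp

lemma vol_closedBall2 {R : ℝ} (hR : 0 ≤ R) :
    volume (Metric.closedBall (0 : EuclideanSpace ℝ (Fin 2)) R) = ENNReal.ofReal (π * R^2) := by
  rw [EuclideanSpace.volume_closedBall]
  have hg : Real.Gamma ((Fintype.card (Fin 2) : ℝ) / 2 + 1) = 1 := by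
    rw [Fintype.card_fin]
    norm_num
  rw [hg, Fintype.card_fin]
  rw [← ENNReal.ofReal_pow hR, ← ENNReal.ofReal_mul (by positivity)]
  congr 1
  rw [div_one, sq_sqrt pi_nonneg]
  ring

lemma vol_ball2 {R : ℝ} (hR : 0 ≤ R) :
    volume (Metric.ball (0 : EuclideanSpace ℝ (Fin 2)) R) = ENNReal.ofReal (π * R^2) := by
  rw [EuclideanSpace.volume_ball]
  have hg : Real.Gamma ((Fintype.card (Fin 2) : ℝ) / 2 + 1) = 1 := by
    rw [Fintype.card_fin]
    norm_num
  rw [hg, Fintype.card_fin]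
  rw [← ENNReal.ofReal_pow hR, ← ENNReal.ofReal_mul (by positivity)]
  congr 1
  rw [div_one, sq_sqrt pi_nonneg]
  ring

lemma sqrt3_le_two : Real.sqrt 3 ≤ 2 := by
  rw [show (2:ℝ) = Real.sqrt 4 by rw [show (4:ℝ) = 2^2 by norm_num, Real.sqrt_sq (by norm_num)]]
  exact Real.sqrt_le_sqrt (by norm_num)

lemma one_le_sqrt3 : (1:ℝ) ≤ Real.sqrt 3 := by
  rw [show (1:ℝ) = Real.sqrt 1 by rw [Real.sqrt_one]]
  exact Real.sqrt_le_sqrt (by norm_num)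

lemma sq_sqrt3 : Real.sqrt 3 ^ 2 = 3 := Real.sq_sqrt (by norm_num)

set_option maxHeartbeats 2000000 in
lemma card_cset_le {R pF : ℝ} (hR : 1 ≤ R) (hpF : 1 ≤ pF) {k : Fin 3 → ℤ} (hk : k ≠ 0)
    (hkR : zNorm k ≤ R) (c : ℤ) : ((cset pF k c).card : ℝ) ≤ 10000 * R^2 * pF := by
  rcases Finset.eq_empty_or_nonempty (cset pF k c) with he | ⟨r₀, hr₀⟩
  · rw [he]; simpa using by positivity
  -- basic quantities
  have hzk1 : 1 ≤ zNorm k := one_le_zNorm hk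
  have hzkpos : (0:ℝ) < zNorm k := lt_of_lt_of_le one_pos hzk1
  set zk := zNorm k with hzkdef
  -- |c| ≤ pF * zk
  obtain ⟨-, h0n, -, h0c⟩ :
      r₀ ∈ box pF ∧ zNorm r₀ ≤ pF ∧ ¬ (zNorm (r₀ + k) ≤ pF) ∧ (∑ i, r₀ i * k i) = c := by
    have := Finset.mem_filter.mp hr₀
    exact ⟨this.1, this.2.1, this.2.2.1, this.2.2.2⟩
  have hcabs : |(c : ℝ)| ≤ pF * zk := by
    have hcr : ((r₀ 0 : ℝ)) * (k 0) + (r₀ 1) * (k 1) + (r₀ 2) * (k 2) = (c:ℝ) := by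
      rw [Fin.sum_univ_three] at h0c
      exact_mod_cast congrArg (fun z : ℤ => (z : ℝ)) h0c
    have hr₀sq := zNorm_sq r₀
    have hksq := zNorm_sq k
    rw [Fin.sum_univ_three] at hr₀sq hksq
    have hcs : (c:ℝ)^2 ≤ (zNorm r₀)^2 * zk^2 := by
      rw [hr₀sq, hksq, ← hcr]
      nlinarith [sq_nonneg ((r₀ 0:ℝ)*(k 1) - (r₀ 1:ℝ)*(k 0)),
        sq_nonneg ((r₀ 0:ℝ)*(k 2) - (r₀ 2:ℝ)*(k 0)), sq_nonneg ((r₀ 1:ℝ)*(k 2) - (r₀ 2:ℝ)*(k 1))]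
    have hle : zNorm r₀ ^ 2 ≤ pF^2 := by nlinarith [zNorm_nonneg r₀]
    have h2 : (c:ℝ)^2 ≤ (pF * zk)^2 := by nlinarith [hle, sq_nonneg zk, hcs]
    have h3 := Real.sqrt_le_sqrt h2
    rwa [Real.sqrt_sq_eq_abs, Real.sqrt_sq (by positivity)] at h3
  set c0 : ℝ := (c:ℝ) / zk with hc0def
  have hc0abs : |c0| ≤ pF := by
    rw [hc0def, abs_div, abs_of_pos hzkpos, div_le_iff₀ hzkpos]
    exact hcabs
  -- the unit vector u and orthonormal basis b with b 0 = u
  set u : EuclideanSpace ℝ (Fin 3) := zk⁻¹ • ι3 k with hudef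
  have hu : ‖u‖ = 1 := by
    rw [hudef, norm_smul, norm_ι3, Real.norm_eq_abs, abs_inv, abs_of_pos hzkpos,
      inv_mul_cancel₀ (ne_of_gt hzkpos)]
  obtain ⟨b, hbmem⟩ : ∃ b : OrthonormalBasis (Fin 3) ℝ (EuclideanSpace ℝ (Fin 3)),
      ∀ i ∈ ({0} : Set (Fin 3)), b i = (fun _ : Fin 3 => u) i := by
    apply Orthonormal.exists_orthonormalBasis_extension_of_card_eq (𝕜 := ℝ)
      (by simp)
    constructor
    · intro i
      simpa [Set.restrict] using hu
    · intro i j hij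
      exact absurd (Subtype.ext (by
        have hi := i.2; have hj := j.2
        simp only [Set.mem_singleton_iff] at hi hj
        rw [hi, hj])) hij
  have hb0 : b 0 = u := hbmem 0 rfl
  -- key sets
  set R2 : ℝ := pF + Real.sqrt 3 with hR2def
  set R1sq : ℝ := pF^2 - (2*(c:ℝ) + zk^2) - 2*Real.sqrt 3*pF with hR1def
  set S : Set (EuclideanSpace ℝ (Fin 3)) :=
    {x | ‖x‖ ≤ R2 ∧ R1sq ≤ ‖x‖^2 ∧ |(inner ℝ u x : ℝ) - c0| ≤ Real.sqrt 3} with hSdef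
  -- each cube of a point of cset is inside S
  have hsub : ∀ r ∈ cset pF k c, cube r ⊆ S := by
    intro r hr x hx
    obtain ⟨-, hrn, hrkn, hrc⟩ :
        r ∈ box pF ∧ zNorm r ≤ pF ∧ ¬ (zNorm (r + k) ≤ pF) ∧ (∑ i, r i * k i) = c := by
      have := Finset.mem_filter.mp hr
      exact ⟨this.1, this.2.1, this.2.2.1, this.2.2.2⟩
    rw [mem_cube] at hx
    have hco : ∀ i, |x i - (r i:ℝ)| ≤ 1 := by
      intro i; have := hx i; rw [abs_le]; constructor <;> [linarith [(hx i).1]; linarith [(hx i).2]]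
    have hdiff : ‖x - ι3 r‖ ≤ Real.sqrt 3 := by
      rw [EuclideanSpace.norm_eq]
      have hsqc : ∀ i, (x i - (r i:ℝ))^2 ≤ 1 := by
        intro i
        have h5 := pow_le_pow_left₀ (abs_nonneg (x i - (r i:ℝ))) (hco i) 2
        rwa [sq_abs, one_pow] at h5
      have hsum : ∑ i, ‖(x - ι3 r) i‖^2 ≤ 3 := by
        rw [Fin.sum_univ_three]
        have e : ∀ i, ‖(x - ι3 r) i‖^2 = (x i - (r i : ℝ))^2 := by
          intro i
          rw [Real.norm_eq_abs, sq_abs]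
          rfl
        rw [e 0, e 1, e 2]
        linarith [hsqc 0, hsqc 1, hsqc 2]
      exact Real.sqrt_le_sqrt hsum
    have hxup : ‖x‖ ≤ R2 := by
      have h1 : ‖x‖ ≤ ‖ι3 r‖ + ‖x - ι3 r‖ := by
        have := norm_add_le (ι3 r) (x - ι3 r)
        simpa using this
      rw [norm_ι3] at h1
      rw [hR2def]; linarith
    have hshell : pF^2 - (2*(c:ℝ) + zk^2) < (zNorm r)^2 := by
      have h1 : pF < zNorm (r + k) := lt_of_not_ge hrkn
      have hcr : ((r 0 : ℝ)) * (k 0) + (r 1) * (k 1) + (r 2) * (k 2) = (c:ℝ) := by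
        rw [Fin.sum_univ_three] at hrc
        exact_mod_cast congrArg (fun z : ℤ => (z : ℝ)) hrc
      have h2 : (zNorm (r+k))^2 = zNorm r^2 + (2*(c:ℝ) + zk^2) := by
        have e1 := zNorm_sq (r+k); have e2 := zNorm_sq r; have e3 := zNorm_sq k
        rw [Fin.sum_univ_three] at e1 e2 e3
        simp only [Pi.add_apply, Int.cast_add] at e1
        rw [e1, e2, hzkdef, e3]
        linarith [hcr]
      nlinarith [zNorm_nonneg (r+k), hpF]
    have hxlow : R1sq ≤ ‖x‖^2 := by
      have hlow : zNorm r - Real.sqrt 3 ≤ ‖x‖ := by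
        have h1 : ‖ι3 r‖ - ‖x - ι3 r‖ ≤ ‖x‖ := by
          have h2 := norm_sub_norm_le (ι3 r) x
          have h3 : ‖ι3 r - x‖ = ‖x - ι3 r‖ := norm_sub_rev _ _
          linarith
        rw [norm_ι3] at h1; linarith
      rcases le_or_gt (Real.sqrt 3) (zNorm r) with hcase | hcase
      · have hx0 : (0:ℝ) ≤ zNorm r - Real.sqrt 3 := by linarith
        have h4 : (zNorm r - Real.sqrt 3)^2 ≤ ‖x‖^2 := by nlinarith [norm_nonneg x]
        rw [hR1def]
        nlinarith [sq_sqrt3, Real.sqrt_nonneg 3, hrn, one_le_sqrt3, hpF]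
      · rw [hR1def]
        nlinarith [sq_nonneg ‖x‖, hshell, zNorm_nonneg r, sq_sqrt3, one_le_sqrt3, hpF,
          Real.sqrt_nonneg 3]
    have hinner : |(inner ℝ u x : ℝ) - c0| ≤ Real.sqrt 3 := by
      have hip : (inner ℝ (ι3 k) x : ℝ) = (k 0:ℝ)*x 0 + (k 1:ℝ)*x 1 + (k 2:ℝ)*x 2 := by
        simp [PiLp.inner_apply, RCLike.inner_apply, conj_trivial, Fin.sum_univ_three, ι3]
        ring
      have hiu : (inner ℝ u x : ℝ) = zk⁻¹ * (inner ℝ (ι3 k) x : ℝ) := by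
        rw [hudef]; exact real_inner_smul_left _ _ _
      have hkabs : |(k 0:ℝ)| + |(k 1:ℝ)| + |(k 2:ℝ)| ≤ Real.sqrt 3 * zk := by
        have hksq := zNorm_sq k
        rw [Fin.sum_univ_three] at hksq
        have h2 : (|(k 0:ℝ)| + |(k 1:ℝ)| + |(k 2:ℝ)|)^2 ≤ 3 * zk^2 := by
          rw [hzkdef, hksq]
          nlinarith [sq_abs ((k 0:ℝ)), sq_abs ((k 1:ℝ)), sq_abs ((k 2:ℝ)),
            sq_nonneg (|(k 0:ℝ)| - |(k 1:ℝ)|), sq_nonneg (|(k 0:ℝ)| - |(k 2:ℝ)|),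
            sq_nonneg (|(k 1:ℝ)| - |(k 2:ℝ)|)]
        have h3 := Real.sqrt_le_sqrt h2
        rw [Real.sqrt_sq_eq_abs, abs_of_nonneg (by positivity)] at h3
        have h4 : Real.sqrt (3 * zk^2) = Real.sqrt 3 * zk := by
          rw [Real.sqrt_mul (by norm_num), Real.sqrt_sq (le_of_lt hzkpos)]
        linarith
      have hcr : ((r 0 : ℝ)) * (k 0) + (r 1) * (k 1) + (r 2) * (k 2) = (c:ℝ) := by
        rw [Fin.sum_univ_three] at hrc
        exact_mod_cast congrArg (fun z : ℤ => (z : ℝ)) hrc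
      have hkey : |(inner ℝ (ι3 k) x : ℝ) - (c:ℝ)| ≤ Real.sqrt 3 * zk := by
        rw [hip, ← hcr]
        have hrw : (k 0:ℝ)*x 0 + (k 1:ℝ)*x 1 + (k 2:ℝ)*x 2 -
            (((r 0 : ℝ)) * (k 0) + (r 1) * (k 1) + (r 2) * (k 2))
            = (k 0:ℝ)*(x 0 - (r 0:ℝ)) + (k 1:ℝ)*(x 1 - (r 1:ℝ)) + (k 2:ℝ)*(x 2 - (r 2:ℝ)) := by
          ring
        rw [hrw]
        have t1 : |(k 0:ℝ)*(x 0 - (r 0:ℝ)) + (k 1:ℝ)*(x 1 - (r 1:ℝ)) + (k 2:ℝ)*(x 2 - (r 2:ℝ))|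
            ≤ |(k 0:ℝ)| * |x 0 - (r 0:ℝ)| + |(k 1:ℝ)| * |x 1 - (r 1:ℝ)| + |(k 2:ℝ)| * |x 2 - (r 2:ℝ)| := by
          have u1 := abs_add_le ((k 0:ℝ)*(x 0 - (r 0:ℝ)) + (k 1:ℝ)*(x 1 - (r 1:ℝ))) ((k 2:ℝ)*(x 2 - (r 2:ℝ)))
          have u2 := abs_add_le ((k 0:ℝ)*(x 0 - (r 0:ℝ))) ((k 1:ℝ)*(x 1 - (r 1:ℝ)))
          simp only [abs_mul] at u1 u2
          linarith
        have t2 : |(k 0:ℝ)| * |x 0 - (r 0:ℝ)| + |(k 1:ℝ)| * |x 1 - (r 1:ℝ)| + |(k 2:ℝ)| * |x 2 - (r 2:ℝ)|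
            ≤ |(k 0:ℝ)| + |(k 1:ℝ)| + |(k 2:ℝ)| := by
          have := hco 0; have := hco 1; have := hco 2
          nlinarith [abs_nonneg ((k 0:ℝ)), abs_nonneg ((k 1:ℝ)), abs_nonneg ((k 2:ℝ)),
            abs_nonneg (x 0 - (r 0:ℝ)), abs_nonneg (x 1 - (r 1:ℝ)), abs_nonneg (x 2 - (r 2:ℝ))]
        linarith
      rw [hiu, hc0def]
      have hrw2 : zk⁻¹ * (inner ℝ (ι3 k) x : ℝ) - (c:ℝ)/zk = zk⁻¹ * ((inner ℝ (ι3 k) x : ℝ) - (c:ℝ)) := by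
        field_simp
      rw [hrw2, abs_mul, abs_inv, abs_of_pos hzkpos]
      have hfin : zk⁻¹ * |(inner ℝ (ι3 k) x : ℝ) - (c:ℝ)| ≤ zk⁻¹ * (Real.sqrt 3 * zk) :=
        mul_le_mul_of_nonneg_left hkey (by positivity)
      have hfin2 : zk⁻¹ * (Real.sqrt 3 * zk) = Real.sqrt 3 := by field_simp
      linarith
    exact ⟨hxup, hxlow, hinner⟩
  -- disjointness of cubes
  have hdisj : (↑(cset pF k c) : Set (Fin 3 → ℤ)).PairwiseDisjoint cube := by
    intro r hrm r' hr'm hne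
    apply Set.disjoint_left.mpr
    intro x hxr hxr'
    apply hne
    funext i
    have h1 := (mem_cube.mp hxr) i
    have h2 := (mem_cube.mp hxr') i
    have l1 : (r i : ℝ) < (r' i : ℝ) + 1 := lt_of_le_of_lt h1.1 h2.2
    have l2 : (r' i : ℝ) < (r i : ℝ) + 1 := lt_of_le_of_lt h2.1 h1.2
    have l1' : r i < r' i + 1 := by exact_mod_cast l1
    have l2' : r' i < r i + 1 := by exact_mod_cast l2
    omega
  have hcard : ((cset pF k c).card : ℝ≥0∞) = volume (⋃ r ∈ cset pF k c, cube r) := by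
    rw [measure_biUnion_finset hdisj (fun r _ => cube_measurable r)]
    simp [volume_cube]
  have hUS : volume (⋃ r ∈ cset pF k c, cube r) ≤ volume S :=
    measure_mono (Set.iUnion₂_subset hsub)
  -- transfer S to coordinates via the orthonormal basis b
  set S' : Set (EuclideanSpace ℝ (Fin 3)) :=
    {y | ‖y‖ ≤ R2 ∧ R1sq ≤ ‖y‖^2 ∧ |y 0 - c0| ≤ Real.sqrt 3} with hS'def
  have hS'meas : MeasurableSet S' := by
    have m1 : Measurable fun y : EuclideanSpace ℝ (Fin 3) => ‖y‖ := continuous_norm.measurable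
    have m2 : Measurable fun y : EuclideanSpace ℝ (Fin 3) => y 0 := by
      exact (measurable_pi_apply 0).comp (MeasurableEquiv.toLp 2 (Fin 3 → ℝ)).symm.measurable
    have : S' = {y : EuclideanSpace ℝ (Fin 3) | ‖y‖ ≤ R2} ∩
        ({y : EuclideanSpace ℝ (Fin 3) | R1sq ≤ ‖y‖^2} ∩
         {y : EuclideanSpace ℝ (Fin 3) | |y 0 - c0| ≤ Real.sqrt 3}) := rfl
    rw [this]
    exact (measurableSet_le m1 measurable_const).inter
      ((measurableSet_le measurable_const (m1.pow_const 2)).inter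
        (measurableSet_le ((m2.sub_const c0).abs) measurable_const))
  have hSS' : S = b.repr ⁻¹' S' := by
    ext x
    simp only [hSdef, hS'def, Set.mem_preimage, Set.mem_setOf_eq]
    rw [LinearIsometryEquiv.norm_map, OrthonormalBasis.repr_apply_apply, hb0]
  have hvolS : volume S = volume S' := by
    rw [hSS']
    exact (b.measurePreserving_repr).measure_preimage hS'meas.nullMeasurableSet
  -- the cylinder set T
  set m0 : ℝ := max (|c0| - Real.sqrt 3) 0 with hm0def
  set b2 : ℝ := R2^2 - m0^2 with hb2def
  set a2 : ℝ := R1sq - (|c0| + Real.sqrt 3)^2 with ha2def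
  set T : Set (EuclideanSpace ℝ (Fin 3)) :=
    {y | y 0 ∈ Set.Icc (c0 - Real.sqrt 3) (c0 + Real.sqrt 3) ∧
      ((y 1)^2 + (y 2)^2) ∈ Set.Icc a2 b2} with hTdef
  have hS'T : S' ⊆ T := by
    intro y hy
    obtain ⟨h1, h2, h3⟩ := hy
    have hn2 : ‖y‖^2 = (y 0)^2 + (y 1)^2 + (y 2)^2 := by
      rw [EuclideanSpace.norm_eq, Real.sq_sqrt (by positivity), Fin.sum_univ_three,
        Real.norm_eq_abs, Real.norm_eq_abs, Real.norm_eq_abs, sq_abs, sq_abs, sq_abs]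
    have habs := abs_le.mp h3
    have hy0u : |y 0| ≤ |c0| + Real.sqrt 3 := by
      have hh : |y 0| ≤ |y 0 - c0| + |c0| := by
        have := abs_add_le (y 0 - c0) c0
        simpa using this
      linarith
    have hy0l : m0 ≤ |y 0| := by
      rw [hm0def]
      apply max_le _ (abs_nonneg _)
      have hh := abs_sub_abs_le_abs_sub c0 (y 0)
      rw [abs_sub_comm c0 (y 0)] at hh
      linarith
    have h5 : (y 0)^2 ≤ (|c0| + Real.sqrt 3)^2 := by
      nlinarith [sq_abs (y 0), abs_nonneg (y 0), abs_nonneg c0, Real.sqrt_nonneg 3]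
    have h6 : m0^2 ≤ (y 0)^2 := by
      have hm0nn : 0 ≤ m0 := le_max_right _ _
      nlinarith [sq_abs (y 0)]
    have h7 : ‖y‖^2 ≤ R2^2 := by
      have hR2nn : 0 ≤ R2 := by rw [hR2def]; positivity
      nlinarith [norm_nonneg y]
    refine ⟨⟨by linarith [habs.1], by linarith [habs.2]⟩,
      ⟨by rw [ha2def]; linarith, by rw [hb2def]; linarith⟩⟩
  -- compute / bound the volume of T
  set I : Set ℝ := Set.Icc (c0 - Real.sqrt 3) (c0 + Real.sqrt 3) with hIdef
  set Ann : Set (Fin 2 → ℝ) := {z | ((z 0)^2 + (z 1)^2) ∈ Set.Icc a2 b2} with hAnndef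
  have hAnnMeas : MeasurableSet Ann := by
    have m : Measurable fun z : Fin 2 → ℝ => (z 0)^2 + (z 1)^2 :=
      ((measurable_pi_apply 0).pow_const 2).add ((measurable_pi_apply 1).pow_const 2)
    exact m measurableSet_Icc
  have hTpiMeas : MeasurableSet {y : Fin 3 → ℝ | y 0 ∈ I ∧ ((y 1)^2 + (y 2)^2) ∈ Set.Icc a2 b2} := by
    have ma : Measurable fun y : Fin 3 → ℝ => y 0 := measurable_pi_apply 0
    have mb : Measurable fun y : Fin 3 → ℝ => (y 1)^2 + (y 2)^2 :=
      ((measurable_pi_apply 1).pow_const 2).add ((measurable_pi_apply 2).pow_const 2)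
    exact (ma measurableSet_Icc).inter (mb measurableSet_Icc)
  have hvolT : volume T ≤ ENNReal.ofReal (2*Real.sqrt 3) * volume Ann := by
    have e1 : volume T = volume {y : Fin 3 → ℝ | y 0 ∈ I ∧ ((y 1)^2 + (y 2)^2) ∈ Set.Icc a2 b2} :=
      (EuclideanSpace.volume_preserving_symm_measurableEquiv_toLp (Fin 3)).measure_preimage
        hTpiMeas.nullMeasurableSet
    have e2 : {y : Fin 3 → ℝ | y 0 ∈ I ∧ ((y 1)^2 + (y 2)^2) ∈ Set.Icc a2 b2}
        = (MeasurableEquiv.piFinSuccAbove (fun _ : Fin 3 => ℝ) 0) ⁻¹' (I ×ˢ Ann) := by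
      ext y
      simp only [Set.mem_setOf_eq, Set.mem_preimage, MeasurableEquiv.piFinSuccAbove_apply,
        Set.mem_prod, hAnndef]
      constructor
      · rintro ⟨hA, hB⟩
        exact ⟨hA, hB⟩
      · rintro ⟨hA, hB⟩
        exact ⟨hA, hB⟩
    have e3 : volume ((MeasurableEquiv.piFinSuccAbove (fun _ : Fin 3 => ℝ) 0) ⁻¹' (I ×ˢ Ann))
        = volume (I ×ˢ Ann) :=
      (volume_preserving_piFinSuccAbove (fun _ : Fin 3 => ℝ) 0).measure_preimage
        (measurableSet_Icc.prod hAnnMeas).nullMeasurableSet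
    rw [e1, e2, e3, Measure.volume_eq_prod, Measure.prod_prod, Real.volume_Icc]
    have hlen : c0 + Real.sqrt 3 - (c0 - Real.sqrt 3) = 2*Real.sqrt 3 := by ring
    rw [hlen]
  have hAnnVol : volume Ann ≤ ENNReal.ofReal (π * (max b2 0 - max a2 0)) := by
    have hAE : volume ((MeasurableEquiv.toLp 2 (Fin 2 → ℝ)).symm ⁻¹' Ann) = volume Ann :=
      (EuclideanSpace.volume_preserving_symm_measurableEquiv_toLp (Fin 2)).measure_preimage
        hAnnMeas.nullMeasurableSet
    rw [← hAE]
    rcases le_or_gt a2 b2 with hab | hab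
    · have hsub2 : (MeasurableEquiv.toLp 2 (Fin 2 → ℝ)).symm ⁻¹' Ann ⊆
          Metric.closedBall 0 (Real.sqrt (max b2 0)) \ Metric.ball 0 (Real.sqrt (max a2 0)) := by
        intro z hz
        obtain ⟨hza, hzb⟩ := hz
        have hnz : ‖z‖^2 = (z 0)^2 + (z 1)^2 := by
          rw [EuclideanSpace.norm_eq, Real.sq_sqrt (by positivity), Fin.sum_univ_two,
            Real.norm_eq_abs, Real.norm_eq_abs, sq_abs, sq_abs]
        constructor
        · rw [Metric.mem_closedBall, dist_zero_right]
          have h7 : ‖z‖^2 ≤ max b2 0 := by rw [hnz]; exact le_max_of_le_left hzb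
          have h8 := Real.sqrt_le_sqrt h7
          rwa [Real.sqrt_sq (norm_nonneg z)] at h8
        · simp only [Metric.mem_ball, dist_zero_right, not_lt, Set.mem_setOf_eq]
          have h7 : max a2 0 ≤ ‖z‖^2 := by rw [hnz]; exact max_le hza (by positivity)
          have h8 := Real.sqrt_le_sqrt h7
          rwa [Real.sqrt_sq (norm_nonneg z)] at h8
      refine le_trans (measure_mono hsub2) ?_
      have hrle : Real.sqrt (max a2 0) ≤ Real.sqrt (max b2 0) :=
        Real.sqrt_le_sqrt (max_le_max hab (le_refl 0))
      rw [measure_diff (Metric.ball_subset_closedBall.trans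
          (Metric.closedBall_subset_closedBall hrle))
        measurableSet_ball.nullMeasurableSet
        (by rw [vol_ball2 (Real.sqrt_nonneg _)]; exact ENNReal.ofReal_ne_top)]
      rw [vol_closedBall2 (Real.sqrt_nonneg _), vol_ball2 (Real.sqrt_nonneg _),
        Real.sq_sqrt (le_max_right b2 0), Real.sq_sqrt (le_max_right a2 0)]
      rw [← ENNReal.ofReal_sub _ (by positivity)]
      apply ENNReal.ofReal_le_ofReal
      ring_nf
      exact le_refl _
    · have hempty : (MeasurableEquiv.toLp 2 (Fin 2 → ℝ)).symm ⁻¹' Ann = ∅ := by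
        ext z
        simp only [Set.mem_preimage, Set.mem_empty_iff_false, iff_false, hAnndef,
          Set.mem_setOf_eq, Set.mem_Icc, not_and, not_le]
        intro hza
        linarith
      rw [hempty, measure_empty]
      exact zero_le'
  -- combine measure bounds
  have hchain : ((cset pF k c).card : ℝ≥0∞) ≤
      ENNReal.ofReal (2*Real.sqrt 3) * ENNReal.ofReal (π * (max b2 0 - max a2 0)) := by
    rw [hcard]
    refine le_trans hUS ?_
    rw [hvolS]
    refine le_trans (measure_mono hS'T) ?_
    refine le_trans hvolT ?_
    exact mul_le_mul_right hAnnVol _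
  -- real arithmetic
  have harith : 2*Real.sqrt 3 * (π * (max b2 0 - max a2 0)) ≤ 10000 * R^2 * pF := by
    have hbr : (|c0| + Real.sqrt 3)^2 - m0^2 ≤ 4*Real.sqrt 3*pF + 12 := by
      rcases le_or_gt (Real.sqrt 3) (|c0|) with hcs | hcs
      · rw [hm0def, max_eq_left (by linarith)]
        nlinarith [hc0abs, Real.sqrt_nonneg 3, sqrt3_le_two, hpF]
      · rw [hm0def, max_eq_right (by linarith)]
        nlinarith [abs_nonneg c0, Real.sqrt_nonneg 3, sqrt3_le_two, sq_sqrt3, hpF]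
    have e1 : (c:ℝ) ≤ pF * zk := le_trans (le_abs_self _) hcabs
    have e2 : zk^2 ≤ pF * zk^2 := by nlinarith
    have e3 : pF * zk ≤ pF * zk^2 := by nlinarith
    have e4 : pF ≤ pF * zk^2 := by nlinarith
    have e5 : Real.sqrt 3 * pF ≤ 2 * pF :=
      mul_le_mul_of_nonneg_right sqrt3_le_two (by linarith)
    have hba : b2 - a2 ≤ 40 * pF * zk^2 := by
      rw [hb2def, ha2def, hR2def, hR1def] at *
      nlinarith [hbr, e1, e2, e3, e4, e5, sq_sqrt3, Real.sqrt_nonneg 3, hpF]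
    have hX : max b2 0 - max a2 0 ≤ 40 * pF * zk^2 := by
      have h40 : (0:ℝ) ≤ 40*pF*zk^2 := by positivity
      rcases le_total b2 0 with h | h
      · rw [max_eq_right h]
        have := le_max_right a2 (0:ℝ)
        linarith
      · rw [max_eq_left h]
        rcases le_total a2 0 with h' | h'
        · rw [max_eq_right h']
          linarith
        · rw [max_eq_left h']
          linarith
    rcases le_total (max b2 0 - max a2 0) 0 with hneg | hpos
    · have hh1 : π * (max b2 0 - max a2 0) ≤ 0 :=
        mul_nonpos_of_nonneg_of_nonpos (le_of_lt Real.pi_pos) hneg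
      have hh2 : 2*Real.sqrt 3 * (π * (max b2 0 - max a2 0)) ≤ 0 :=
        mul_nonpos_of_nonneg_of_nonpos (by positivity) hh1
      have hh3 : (0:ℝ) ≤ 10000*R^2*pF := by positivity
      linarith
    · have hpi4 := Real.pi_le_four
      have hzkR2 : zk^2 ≤ R^2 := by nlinarith [zNorm_nonneg k, hkR, hzk1]
      have l0 : (0:ℝ) ≤ π * (max b2 0 - max a2 0) :=
        mul_nonneg (le_of_lt Real.pi_pos) hpos
      have l1 : 2*Real.sqrt 3 * (π * (max b2 0 - max a2 0)) ≤ 4 * (π * (max b2 0 - max a2 0)) := by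
        apply mul_le_mul_of_nonneg_right _ l0
        nlinarith [sqrt3_le_two]
      have l2 : π * (max b2 0 - max a2 0) ≤ 4 * (max b2 0 - max a2 0) := by
        nlinarith [hpos, hpi4]
      have l3 : (max b2 0 - max a2 0) ≤ 40 * pF * R^2 := by
        have := mul_le_mul_of_nonneg_left hzkR2 (by linarith : (0:ℝ) ≤ 40 * pF)
        nlinarith [hX]
      nlinarith [l1, l2, l3, hpos, hpF, hR, Real.pi_pos]
  -- conclude
  have hfinalEN : ((cset pF k c).card : ℝ≥0∞) ≤ ENNReal.ofReal (10000*R^2*pF) := by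
    refine le_trans hchain ?_
    rw [← ENNReal.ofReal_mul (by positivity)]
    exact ENNReal.ofReal_le_ofReal harith
  rw [← ENNReal.ofReal_natCast] at hfinalEN
  exact (ENNReal.ofReal_le_ofReal_iff (by positivity)).mp hfinalEN

-- prefactor facts
lemma prefac_bound {a b : ℝ} (ha0 : 0 ≤ a) (ha1 : a ≤ 1) (hb0 : 0 ≤ b) (hb1 : b ≤ 1) :
    0 ≤ (1 / (2 * π)) * a * b * ((2 * π) ^ 3)⁻¹ ∧
      (1 / (2 * π)) * a * b * ((2 * π) ^ 3)⁻¹ ≤ 1 := by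
  have hpi : (3:ℝ) < π := pi_gt_three
  have h1 : (0:ℝ) < 2 * π := by linarith
  have h2 : (1:ℝ) ≤ 2 * π := by linarith
  have h3 : (1:ℝ) ≤ (2 * π)^3 := one_le_pow₀ h2
  have i10 : (0:ℝ) ≤ 1 / (2*π) := by positivity
  have i11 : 1 / (2*π) ≤ 1 := by rw [div_le_one h1]; linarith
  have i20 : (0:ℝ) ≤ ((2*π)^3)⁻¹ := by positivity
  have i21 : ((2*π)^3)⁻¹ ≤ 1 := by
    rw [inv_le_one_iff₀]; right; exact h3
  constructor
  · positivity
  · calc (1 / (2 * π)) * a * b * ((2 * π) ^ 3)⁻¹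
        ≤ 1 * 1 * 1 * 1 := by
          apply mul_le_mul _ i21 i20 (by norm_num)
          apply mul_le_mul _ hb1 hb0 (by norm_num)
          apply mul_le_mul i11 ha1 ha0 (by norm_num)
    _ = 1 := by norm_num

lemma abs_alphaH_le {R pF : ℝ} (hR : 1 ≤ R) (hpF : 1 ≤ pF) (h : Fin 3 → ℤ) {k : Fin 3 → ℤ}
    (hk : k ≠ 0) (hkR : zNorm k ≤ R) : |alphaH pF h k| ≤ 10000 * R^2 * pF := by
  rw [alphaH, inner_tsum_eq]
  obtain ⟨hf0, hf1⟩ := prefac_bound (chi_nonneg pF h) (chi_le_one pF h)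
    (chi_nonneg pF (h + k)) (chi_le_one pF (h + k))
  have hN0 : (0:ℝ) ≤ ((cset pF k (∑ i, h i * k i)).card : ℝ) := Nat.cast_nonneg _
  have hNle := card_cset_le hR hpF hk hkR (∑ i, h i * k i)
  rw [abs_of_nonneg (mul_nonneg hf0 hN0)]
  calc (1 / (2 * π)) * chi pF h * chi pF (h + k) * ((2 * π) ^ 3)⁻¹ *
      ((cset pF k (∑ i, h i * k i)).card : ℝ) ≤ 1 * ((cset pF k (∑ i, h i * k i)).card : ℝ) :=
        mul_le_mul_of_nonneg_right hf1 hN0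
  _ ≤ 10000 * R^2 * pF := by rw [one_mul]; exact hNle

lemma abs_alphaP_le {R pF : ℝ} (hR : 1 ≤ R) (hpF : 1 ≤ pF) (p : Fin 3 → ℤ) {k : Fin 3 → ℤ}
    (hk : k ≠ 0) (hkR : zNorm k ≤ R) : |alphaP pF p k| ≤ 10000 * R^2 * pF := by
  rw [alphaP, inner_tsum_eq]
  obtain ⟨hf0, hf1⟩ := prefac_bound (chiP_nonneg pF p) (chiP_le_one pF p)
    (chiP_nonneg pF (p - k)) (chiP_le_one pF (p - k))
  have hN0 : (0:ℝ) ≤ ((cset pF k (∑ i, (p i - k i) * k i)).card : ℝ) := Nat.cast_nonneg _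
  have hNle := card_cset_le hR hpF hk hkR (∑ i, (p i - k i) * k i)
  rw [abs_of_nonneg (mul_nonneg hf0 hN0)]
  calc (1 / (2 * π)) * chiP pF p * chiP pF (p - k) * ((2 * π) ^ 3)⁻¹ *
      ((cset pF k (∑ i, (p i - k i) * k i)).card : ℝ)
      ≤ 1 * ((cset pF k (∑ i, (p i - k i) * k i)).card : ℝ) :=
        mul_le_mul_of_nonneg_right hf1 hN0
  _ ≤ 10000 * R^2 * pF := by rw [one_mul]; exact hNle

lemma abs4 (a b c d : ℝ) : |a - b + c - d| ≤ |a| + |b| + |c| + |d| :=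
  abs_le.mpr ⟨by linarith [neg_abs_le a, le_abs_self b, neg_abs_le c, le_abs_self d],
    by linarith [le_abs_self a, neg_abs_le b, le_abs_self c, neg_abs_le d]⟩

lemma tri {A x y a m m' : ℝ} (hA : |A| ≤ a) (hx : |x| ≤ m) (hy : |y| ≤ m') :
    |A * x * y| ≤ a * m * m' := by
  rw [abs_mul, abs_mul]
  have h1 : |A| * |x| ≤ a * m :=
    mul_le_mul hA hx (abs_nonneg _) (le_trans (abs_nonneg _) hA)
  exact mul_le_mul h1 hy (abs_nonneg _)
    (le_trans (mul_nonneg (abs_nonneg _) (abs_nonneg _)) h1)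


end Aux8
end Aux8helper

open Aux8 in
/-- Upper bound for `𝓑`: for `r ≥ 1` and `V̂` compactly supported in the ball of radius `r`,
even, with `V̂(0) = 0`, there is `C > 0` depending only on `r` and `∑ V̂(k)²` such that for
every `p_F ≥ 1` and every bounded `f : ℤ³ → ℝ`,
`sup_q |𝓑[f](q)| ≤ C·p_F·(sup|f|)·(sup|1 − f|)`. -/
theorem stmt8 (r S : ℝ) (hr : 1 ≤ r) :
    ∃ C : ℝ, 0 < C ∧ ∀ Vh : (Fin 3 → ℤ) → ℝ,
      (∀ k, r < zNorm k → Vh k = 0) → (∀ k, Vh (-k) = Vh k) → Vh 0 = 0 →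
      (∑' k : Fin 3 → ℤ, (Vh k) ^ 2) ≤ S →
      ∀ pF : ℝ, 1 ≤ pF → ∀ f : (Fin 3 → ℤ) → ℝ, (∃ M, ∀ p, |f p| ≤ M) →
        ∀ q : Fin 3 → ℤ,
          |Bop pF Vh f q| ≤ C * pF * (⨆ p, |f p|) * (⨆ p, |1 - f p|) := by
  refine ⟨40000 * (r^2 + 1) * (|S| + 1), by positivity, ?_⟩
  intro Vh hsupp hsym h0 hsumS pF hpF f hfb q
  obtain ⟨M0, hM0⟩ := hfb
  set M := ⨆ p, |f p| with hMdef
  set M' := ⨆ p, |1 - f p| with hM'def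
  have hbdd : BddAbove (Set.range fun p : Fin 3 → ℤ => |f p|) := by
    refine ⟨M0, ?_⟩
    rintro _ ⟨p, rfl⟩
    exact hM0 p
  have hMle : ∀ p, |f p| ≤ M := fun p => le_ciSup hbdd p
  have hbdd' : BddAbove (Set.range fun p : Fin 3 → ℤ => |1 - f p|) := by
    refine ⟨1 + M0, ?_⟩
    rintro _ ⟨p, rfl⟩
    have h1 : |1 - f p| ≤ |(1:ℝ)| + |f p| := by
      rw [sub_eq_add_neg]
      exact le_trans (abs_add_le 1 (-f p)) (by rw [abs_neg])
    have := hM0 p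
    rw [abs_one] at h1
    linarith
  have hM'le : ∀ p, |1 - f p| ≤ M' := fun p => le_ciSup hbdd' p
  have hM0' : (0:ℝ) ≤ M := le_trans (abs_nonneg _) (hMle 0)
  have hM'0 : (0:ℝ) ≤ M' := le_trans (abs_nonneg _) (hM'le 0)
  have hVzero : ∀ k : Fin 3 → ℤ, k ∉ box r → Vh k = 0 := fun k hk =>
    hsupp k (lt_of_not_ge (fun hle => hk (mem_box hle)))
  have hterm0 : ∀ k : Fin 3 → ℤ, k ∉ box r →
      (Vh k) ^ 2 * (alphaH pF (q - k) k * f (q - k) * (1 - f q)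
        - alphaH pF q k * f q * (1 - f (q + k))
        + alphaP pF (q + k) k * f (q + k) * (1 - f q)
        - alphaP pF q k * f q * (1 - f (q - k))) = 0 := by
    intro k hk
    rw [hVzero k hk]
    ring
  have hBrw : Bop pF Vh f q = 2 * π * ((2 * π) ^ 3)⁻¹ *
      ∑ k ∈ box r, (Vh k) ^ 2 *
        (alphaH pF (q - k) k * f (q - k) * (1 - f q)
          - alphaH pF q k * f q * (1 - f (q + k))
          + alphaP pF (q + k) k * f (q + k) * (1 - f q)
          - alphaP pF q k * f q * (1 - f (q - k))) := by
    rw [Bop, tsum_eq_sum hterm0]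
  set β : ℝ := 10000 * r^2 * pF * M * M' with hβdef
  have hβ0 : (0:ℝ) ≤ β := by positivity
  have hterm : ∀ k ∈ box r, |(Vh k) ^ 2 *
      (alphaH pF (q - k) k * f (q - k) * (1 - f q)
        - alphaH pF q k * f q * (1 - f (q + k))
        + alphaP pF (q + k) k * f (q + k) * (1 - f q)
        - alphaP pF q k * f q * (1 - f (q - k)))| ≤ (Vh k) ^ 2 * (4 * β) := by
    intro k hkF
    rcases eq_or_ne (Vh k) 0 with hv | hv
    · rw [hv]
      simp
    · have hkR : zNorm k ≤ r := le_of_not_gt (fun hgt => hv (hsupp k hgt))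
      have hk0 : k ≠ 0 := by
        rintro rfl
        exact hv h0
      have t1 := tri (abs_alphaH_le hr hpF (q - k) hk0 hkR) (hMle (q - k)) (hM'le q)
      have t2 := tri (abs_alphaH_le hr hpF q hk0 hkR) (hMle q) (hM'le (q + k))
      have t3 := tri (abs_alphaP_le hr hpF (q + k) hk0 hkR) (hMle (q + k)) (hM'le q)
      have t4 := tri (abs_alphaP_le hr hpF q hk0 hkR) (hMle q) (hM'le (q - k))
      have h4 := abs4 (alphaH pF (q - k) k * f (q - k) * (1 - f q))
        (alphaH pF q k * f q * (1 - f (q + k)))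
        (alphaP pF (q + k) k * f (q + k) * (1 - f q))
        (alphaP pF q k * f q * (1 - f (q - k)))
      rw [abs_mul, abs_of_nonneg (sq_nonneg (Vh k))]
      have hT : |alphaH pF (q - k) k * f (q - k) * (1 - f q)
          - alphaH pF q k * f q * (1 - f (q + k))
          + alphaP pF (q + k) k * f (q + k) * (1 - f q)
          - alphaP pF q k * f q * (1 - f (q - k))| ≤ 4 * β := by
        rw [hβdef]
        have e : 10000 * r^2 * pF * M * M' = 10000 * r^2 * pF * M * M' := rfl
        nlinarith [t1, t2, t3, t4, h4]
      exact mul_le_mul_of_nonneg_left hT (sq_nonneg _)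
  have hsum_le : ∑ k ∈ box r, (Vh k)^2 ≤ S := by
    have : (∑' k : Fin 3 → ℤ, (Vh k) ^ 2) = ∑ k ∈ box r, (Vh k)^2 :=
      tsum_eq_sum (fun k hk => by rw [hVzero k hk]; ring)
    rw [← this]
    exact hsumS
  have hS0 : (0:ℝ) ≤ S := le_trans (Finset.sum_nonneg (fun k _ => sq_nonneg _)) hsum_le
  have habs_sum : |∑ k ∈ box r, (Vh k) ^ 2 *
      (alphaH pF (q - k) k * f (q - k) * (1 - f q)
        - alphaH pF q k * f q * (1 - f (q + k))
        + alphaP pF (q + k) k * f (q + k) * (1 - f q)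
        - alphaP pF q k * f q * (1 - f (q - k)))| ≤ S * (4 * β) := by
    refine le_trans (Finset.abs_sum_le_sum_abs _ _) ?_
    refine le_trans (Finset.sum_le_sum hterm) ?_
    rw [← Finset.sum_mul]
    exact mul_le_mul_of_nonneg_right hsum_le (by positivity)
  have hpref0 : (0:ℝ) < 2 * π * ((2 * π) ^ 3)⁻¹ := by positivity
  have hpref1 : 2 * π * ((2 * π) ^ 3)⁻¹ ≤ 1 := by
    have hpi : (3:ℝ) < π := pi_gt_three
    rw [mul_inv_le_iff₀ (by positivity), one_mul]
    have h1 : (1:ℝ) ≤ (2*π)^2 := by nlinarith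
    have h2 : 2*π*1 ≤ 2*π*(2*π)^2 := mul_le_mul_of_nonneg_left h1 (by positivity)
    nlinarith [h2]
  rw [hBrw, abs_mul, abs_of_pos hpref0]
  have hstep : 2 * π * ((2 * π) ^ 3)⁻¹ * |∑ k ∈ box r, (Vh k) ^ 2 *
      (alphaH pF (q - k) k * f (q - k) * (1 - f q)
        - alphaH pF q k * f q * (1 - f (q + k))
        + alphaP pF (q + k) k * f (q + k) * (1 - f q)
        - alphaP pF q k * f q * (1 - f (q - k)))| ≤ S * (4 * β) := by
    calc 2 * π * ((2 * π) ^ 3)⁻¹ * |_| ≤ 1 * (S * (4 * β)) := by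
          apply mul_le_mul hpref1 habs_sum (abs_nonneg _) (by norm_num)
    _ = S * (4 * β) := by rw [one_mul]
  refine le_trans hstep ?_
  rw [hβdef]
  have q1 : S * (4 * (10000 * r^2 * pF * M * M'))
      ≤ (|S| + 1) * (4 * (10000 * r^2 * pF * M * M')) :=
    mul_le_mul_of_nonneg_right (by linarith [le_abs_self S]) (by positivity)
  have q2 : (|S| + 1) * (4 * (10000 * r^2 * pF * M * M'))
      ≤ (|S| + 1) * (4 * (10000 * (r^2 + 1) * pF * M * M')) := by
    apply mul_le_mul_of_nonneg_left _ (by positivity)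
    have : r^2 * pF * M * M' ≤ (r^2+1) * pF * M * M' := by
      have h1 : r^2 * (pF * M * M') ≤ (r^2+1) * (pF * M * M') :=
        mul_le_mul_of_nonneg_right (by linarith) (by positivity)
      nlinarith [h1]
    nlinarith [this]
  refine le_trans q1 (le_trans q2 ?_)
  apply le_of_eq
  ring
end

section
/- Let r ≥ 1 be an integer, ε ∈ (0, 1), and let V̂ : ℤ³ → ℝ satisfy: V̂(k) = 0 for |k| > r; V̂(−k) = V̂(k); V̂(0) = 0; V̂(k) = V̂(k') whenever |k| = |k'| (rotational symmetry); and V̂((0,0,m)) > 0 for every integer m with 1 ≤ m ≤ r. Then there exist constants C > 0 and P₀ ≥ 1, depending only on r, ε and V̂, such that the following holds for every p_F ≥ P₀: if H ⊂ {h ∈ ℤ³ : |h| < p_F − 3r} and P ⊂ {p ∈ ℤ³ : |p| > p_F + 3r} are finite sets such that |x − y| > r for all distinct x, y ∈ H ∪ P, and such that every q ∈ H ∪ P has some coordinate i ∈ {1,2,3} with ε·p_F² ≤ q_i² ≤ (1 − ε)·p_F², then the indicator function f of H ∪ P satisfies |𝓑[f](q)| ≥ C·p_F for every q ∈ H ∪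 P. -/
open Real

lemma zNorm_nonneg {d : ℕ} (p : Fin d → ℤ) : 0 ≤ zNorm p := Real.sqrt_nonneg _

lemma zNorm_le_iff {d : ℕ} {p : Fin d → ℤ} {c : ℝ} (hc : 0 ≤ c) :
    zNorm p ≤ c ↔ ∑ i, ((p i : ℝ)) ^ 2 ≤ c ^ 2 := by
  unfold zNorm
  constructor
  · intro h
    have h1 : (0:ℝ) ≤ ∑ i, ((p i : ℝ)) ^ 2 := by positivity
    nlinarith [Real.sq_sqrt h1, Real.sqrt_nonneg (∑ i, ((p i : ℝ)) ^ 2)]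
  · intro h
    calc Real.sqrt (∑ i, ((p i : ℝ)) ^ 2) ≤ Real.sqrt (c ^ 2) := Real.sqrt_le_sqrt h
    _ = c := Real.sqrt_sq hc

lemma lt_zNorm_iff {d : ℕ} {p : Fin d → ℤ} {c : ℝ} (hc : 0 ≤ c) :
    c < zNorm p ↔ c ^ 2 < ∑ i, ((p i : ℝ)) ^ 2 := by
  rw [← not_le, ← not_le, zNorm_le_iff hc]

lemma zNorm_neg {d : ℕ} (p : Fin d → ℤ) : zNorm (-p) = zNorm p := by
  unfold zNorm
  congr 1
  refine Finset.sum_congr rfl fun j _ => ?_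
  simp only [Pi.neg_apply]
  push_cast
  ring

lemma coord_sq_le {d : ℕ} (p : Fin d → ℤ) (i : Fin d) :
    ((p i : ℝ)) ^ 2 ≤ ∑ j, ((p j : ℝ)) ^ 2 :=
  Finset.single_le_sum (f := fun j => ((p j : ℝ)) ^ 2) (fun j _ => by positivity) (Finset.mem_univ i)

lemma chi_eq_one {d : ℕ} {pF : ℝ} {p : Fin d → ℤ} (h : zNorm p ≤ pF) : chi pF p = 1 := if_pos h
lemma chi_eq_zero {d : ℕ} {pF : ℝ} {p : Fin d → ℤ} (h : pF < zNorm p) : chi pF p = 0 :=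
  if_neg (not_le.mpr h)
lemma chi_nonneg {d : ℕ} (pF : ℝ) (p : Fin d → ℤ) : 0 ≤ chi pF p := by
  unfold chi; split <;> norm_num
lemma chiP_nonneg {d : ℕ} (pF : ℝ) (p : Fin d → ℤ) : 0 ≤ chiP pF p := by
  unfold chiP chi; split <;> norm_num
lemma chiP_eq_one {d : ℕ} {pF : ℝ} {p : Fin d → ℤ} (h : pF < zNorm p) : chiP pF p = 1 := by
  unfold chiP; rw [chi_eq_zero h]; ring

lemma summable_of_zNorm_bound (F : (Fin 3 → ℤ) → ℝ) (c : ℝ)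
    (h : ∀ x, F x ≠ 0 → zNorm x ≤ c) : Summable F := by
  rcases le_or_gt 0 c with hc | hc
  · apply summable_of_ne_finset_zero
      (s := Fintype.piFinset fun _ : Fin 3 => Finset.Icc (-⌈c⌉) ⌈c⌉)
    intro x hx
    by_contra hF
    apply hx
    rw [Fintype.mem_piFinset]
    intro j
    rw [Finset.mem_Icc]
    have h1 : ((x j : ℝ)) ^ 2 ≤ c ^ 2 := le_trans (coord_sq_le x j) ((zNorm_le_iff hc).mp (h x hF))
    have h2 : (x j : ℝ) ≤ c := by nlinarith
    have h3 : -c ≤ (x j : ℝ) := by nlinarith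
    have h4 : (x j : ℝ) ≤ (⌈c⌉ : ℝ) := le_trans h2 (Int.le_ceil c)
    have h5 : ((-⌈c⌉ : ℤ) : ℝ) ≤ (x j : ℝ) := by push_cast; linarith [Int.le_ceil c]
    exact ⟨by exact_mod_cast h5, by exact_mod_cast h4⟩
  · have hzero : F = fun _ => 0 := by
      funext x
      by_contra hF
      exact absurd (h x hF) (not_le.mpr (lt_of_lt_of_le hc (zNorm_nonneg x)))
    rw [hzero]
    exact summable_zero

lemma sum_three (i : Fin 3) (g : Fin 3 → ℝ) : ∑ j, g j = g i + g (i+1) + g (i+2) := by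
  fin_cases i <;> simp [Fin.sum_univ_three] <;> ring
lemma sum_three_int (i : Fin 3) (g : Fin 3 → ℤ) : ∑ j, g j = g i + g (i+1) + g (i+2) := by
  fin_cases i <;> simp [Fin.sum_univ_three] <;> ring
lemma fin3_i1 (i : Fin 3) : i + 1 ≠ i := by revert i; decide
lemma fin3_i2 (i : Fin 3) : i + 2 ≠ i := by revert i; decide
lemma fin3_i21 (i : Fin 3) : i + 2 ≠ i + 1 := by revert i; decide

lemma alphaH_nonneg' (pF : ℝ) (F : (Fin 3 → ℤ) → ℝ) : True := trivial

set_option maxHeartbeats 1000000 in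
lemma key_ab (A B : ℝ) (s : ℤ) (hs0 : 0 ≤ s) (hBA : B - A = 2*(s:ℝ) + 1)
    (a bb : ℤ)
    (hbb : bb = if (a:ℝ)^2 ≤ A then ⌊Real.sqrt (B - (a:ℝ)^2)⌋ else 0)
    (ha2As : A - (s:ℝ)^2 < (a:ℝ)^2) (ha2B : (a:ℝ)^2 ≤ B) :
    A < (a:ℝ)^2 + ((bb:ℤ):ℝ)^2 ∧ (a:ℝ)^2 + ((bb:ℤ):ℝ)^2 ≤ B := by
  have hs0R : (0:ℝ) ≤ (s:ℝ) := by exact_mod_cast hs0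
  by_cases hc : (a:ℝ)^2 ≤ A
  · rw [if_pos hc] at hbb
    have hu0 : (0:ℝ) ≤ A - (a:ℝ)^2 := by linarith
    have hus : A - (a:ℝ)^2 < (s:ℝ)^2 := by linarith
    have hw0 : (0:ℝ) ≤ B - (a:ℝ)^2 := by linarith
    have hsw : Real.sqrt (B - (a:ℝ)^2) ^ 2 = B - (a:ℝ)^2 := Real.sq_sqrt hw0
    have hsu : Real.sqrt (A - (a:ℝ)^2) ^ 2 = A - (a:ℝ)^2 := Real.sq_sqrt hu0
    have hsR : (0:ℝ) < (s:ℝ) := by nlinarith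
    have hsus : Real.sqrt (A - (a:ℝ)^2) < (s:ℝ) := by
      nlinarith [Real.sqrt_nonneg (A - (a:ℝ)^2)]
    have h1 : Real.sqrt (A - (a:ℝ)^2) + 1 < Real.sqrt (B - (a:ℝ)^2) := by
      nlinarith [Real.sqrt_nonneg (A - (a:ℝ)^2), Real.sqrt_nonneg (B - (a:ℝ)^2)]
    have hb1 : Real.sqrt (B - (a:ℝ)^2) - 1 < ((bb : ℤ):ℝ) := by
      rw [hbb]
      linarith [Int.lt_floor_add_one (Real.sqrt (B - (a:ℝ)^2))]
    have hbgtu : Real.sqrt (A - (a:ℝ)^2) < ((bb:ℤ):ℝ) := by linarith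
    have hb0' : (0:ℝ) ≤ ((bb:ℤ):ℝ) := by
      rw [hbb]
      exact_mod_cast Int.floor_nonneg.mpr (Real.sqrt_nonneg _)
    have hble : ((bb:ℤ):ℝ) ≤ Real.sqrt (B - (a:ℝ)^2) := by
      rw [hbb]; exact Int.floor_le _
    constructor
    · nlinarith [Real.sqrt_nonneg (A - (a:ℝ)^2)]
    · nlinarith
  · rw [if_neg hc] at hbb
    rw [hbb]
    push_cast
    push_neg at hc
    constructor
    · nlinarith
    · nlinarith

set_option maxHeartbeats 1000000 in
lemma count_lower (pF ε : ℝ) (hε0 : 0 < ε) (hε1 : ε < 1) (hpF : 4 / ε ≤ pF)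
    (i : Fin 3) (σ : ℤ) (hσ : σ = 1 ∨ σ = -1)
    (k₀ : Fin 3 → ℤ) (hk₀ : k₀ = fun j => if j = i then σ else 0)
    (s : ℤ) (hs0 : 0 ≤ s) (t : ℝ) (ht0 : 0 ≤ t)
    (ht1 : ε * pF ^ 2 ≤ t ^ 2) (ht2 : t ^ 2 ≤ (1 - ε) * pF ^ 2)
    (hst : (s : ℝ) ≤ t) (hts : t - 1 ≤ (s : ℝ))
    (F : (Fin 3 → ℤ) → ℝ) (hF0 : ∀ x, 0 ≤ F x) (hFs : Summable F)
    (hF : ∀ x : Fin 3 → ℤ, zNorm x ≤ pF → pF < zNorm (x + k₀) →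
      (∑ j, x j * k₀ j) = s → F x = 1) :
    ε / 4 * pF ≤ ∑' x, F x := by
  classical
  have hpF0 : 0 < pF := lt_of_lt_of_le (by positivity) hpF
  have hεpF : 4 ≤ ε * pF := by
    rw [div_le_iff₀ hε0] at hpF
    linarith
  have hs0R : (0:ℝ) ≤ (s:ℝ) := by exact_mod_cast hs0
  set A : ℝ := pF ^ 2 - ((s:ℝ) + 1) ^ 2 with hA
  set B : ℝ := pF ^ 2 - (s:ℝ) ^ 2 with hB
  have hs2t2 : (s:ℝ)^2 ≤ t^2 := by nlinarith
  have hBε : ε * pF ^ 2 ≤ B := by rw [hB]; nlinarith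
  have hB0 : 0 < B := lt_of_lt_of_le (by positivity) hBε
  set A' : ℝ := max (A - (s:ℝ)^2) 0 with hA'
  have hA'0 : 0 ≤ A' := le_max_right _ _
  have hAB : A ≤ B := by rw [hA, hB]; nlinarith
  have hA'B : A' ≤ B := max_le (by nlinarith) hB0.le
  have hts1 : t ≤ (s:ℝ) + 1 := by linarith
  have hBA' : ε * pF ^ 2 ≤ B - A' := by
    rcases max_cases (A - (s:ℝ)^2) 0 with ⟨he, _⟩ | ⟨he, _⟩
    · rw [hA']
      rw [he]
      have hd : B - (A - (s:ℝ)^2) = ((s:ℝ)+1)^2 := by rw [hA, hB]; ring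
      nlinarith
    · rw [hA', he]
      linarith
  set m : ℤ := ⌊Real.sqrt A'⌋ with hm
  set M : ℤ := ⌊Real.sqrt B⌋ with hM
  have hm0 : 0 ≤ m := Int.floor_nonneg.mpr (Real.sqrt_nonneg _)
  have hsB : Real.sqrt B ≤ pF := by
    have h1 : Real.sqrt B ≤ Real.sqrt (pF ^ 2) := Real.sqrt_le_sqrt (by rw [hB]; nlinarith)
    rwa [Real.sqrt_sq hpF0.le] at h1
  have hsA' : Real.sqrt A' ≤ Real.sqrt B := Real.sqrt_le_sqrt hA'B
  have hsqB : Real.sqrt B ^ 2 = B := Real.sq_sqrt hB0.le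
  have hsqA' : Real.sqrt A' ^ 2 = A' := Real.sq_sqrt hA'0
  have hgap : ε / 2 * pF ≤ Real.sqrt B - Real.sqrt A' := by
    have hxy : Real.sqrt A' + Real.sqrt B ≤ 2 * pF := by linarith
    have hmono := mul_le_mul_of_nonneg_left hxy (sub_nonneg.mpr hsA')
    nlinarith [hmono, Real.sqrt_nonneg A']
  have hMm : ε / 4 * pF ≤ (M : ℝ) - (m : ℝ) := by
    have h1 : Real.sqrt B < (M : ℝ) + 1 := Int.lt_floor_add_one _
    have h2 : (m : ℝ) ≤ Real.sqrt A' := Int.floor_le _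
    nlinarith
  set b : ℤ → ℤ := fun a => if (a:ℝ)^2 ≤ A then ⌊Real.sqrt (B - (a:ℝ)^2)⌋ else 0 with hbdef
  have hBA : B - A = 2*(s:ℝ) + 1 := by rw [hA, hB]; ring
  have key : ∀ a : ℤ, a ∈ Finset.Ioc m M →
      (1 ≤ a) ∧ (A < (a:ℝ)^2 + ((b a : ℤ):ℝ)^2) ∧ ((a:ℝ)^2 + ((b a:ℤ):ℝ)^2 ≤ B) := by
    intro a ha
    rw [Finset.mem_Ioc] at ha
    obtain ⟨ham, haM⟩ := ha
    have ha1 : 1 ≤ a := by omega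
    have ha0R : (0:ℝ) ≤ (a:ℝ) := by exact_mod_cast (by omega : (0:ℤ) ≤ a)
    have haA' : Real.sqrt A' < (a:ℝ) := by
      have h1 : Real.sqrt A' < (m:ℝ) + 1 := Int.lt_floor_add_one _
      have h2 : ((m:ℝ) + 1) ≤ (a:ℝ) := by exact_mod_cast (by omega : m + 1 ≤ a)
      linarith
    have ha2A' : A' < (a:ℝ)^2 := by nlinarith [Real.sqrt_nonneg A']
    have ha2As : A - (s:ℝ)^2 < (a:ℝ)^2 := lt_of_le_of_lt (le_max_left _ _) ha2A'
    have haB : (a:ℝ) ≤ Real.sqrt B := by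
      have h1 : (a:ℝ) ≤ (M:ℝ) := by exact_mod_cast haM
      linarith [Int.floor_le (Real.sqrt B)]
    have ha2B : (a:ℝ)^2 ≤ B := by nlinarith
    have hbdef' : b a = if (a:ℝ)^2 ≤ A then ⌊Real.sqrt (B - (a:ℝ)^2)⌋ else 0 := by rw [hbdef]
    obtain ⟨h1, h2⟩ := key_ab A B s hs0 hBA a (b a) hbdef' ha2As ha2B
    exact ⟨ha1, h1, h2⟩
  set ra : ℤ → (Fin 3 → ℤ) := fun a j => if j = i then σ * s else if j = i + 1 then a else b a
    with hra
  set T : Finset (Fin 3 → ℤ) := (Finset.Ioc m M).image ra with hT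
  have hinj : Set.InjOn ra (Finset.Ioc m M) := by
    intro a _ a' _ hee
    have h1 := congrFun hee (i+1)
    simpa [hra, fin3_i1 i] using h1
  have hMge : m ≤ M := by
    rcases le_or_gt m M with h | h
    · exact h
    · exfalso
      have h1 : (M:ℝ) < (m:ℝ) := by exact_mod_cast h
      nlinarith
  have hcard : (T.card : ℝ) = (M:ℝ) - (m:ℝ) := by
    rw [hT, Finset.card_image_of_injOn hinj, Int.card_Ioc]
    rw [show ((M - m).toNat : ℝ) = (((M - m).toNat : ℤ) : ℝ) by push_cast; ring]
    rw [Int.toNat_of_nonneg (by omega)]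
    push_cast; ring
  have hmem : ∀ x ∈ T, F x = 1 := by
    intro x hx
    rw [hT, Finset.mem_image] at hx
    obtain ⟨a, ha, rfl⟩ := hx
    obtain ⟨ha1, hab1, hab2⟩ := key a ha
    have hσ2 : (σ:ℝ) * (σ:ℝ) = 1 := by rcases hσ with h|h <;> rw [h] <;> norm_num
    have e0 : ra a i = σ * s := by rw [hra]; simp
    have e1 : ra a (i+1) = a := by rw [hra]; simp [fin3_i1 i]
    have e2 : ra a (i+2) = b a := by rw [hra]; simp [fin3_i2 i, fin3_i21 i]
    have k0 : k₀ i = σ := by rw [hk₀]; simp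
    have k1 : k₀ (i+1) = 0 := by rw [hk₀]; simp [fin3_i1 i]
    have k2 : k₀ (i+2) = 0 := by rw [hk₀]; simp [fin3_i2 i]
    apply hF
    · rw [zNorm_le_iff hpF0.le, sum_three i]
      rw [e0, e1, e2]
      push_cast
      nlinarith
    · rw [lt_zNorm_iff hpF0.le, sum_three i]
      simp only [Pi.add_apply]
      rw [e0, e1, e2, k0, k1, k2]
      push_cast
      nlinarith
    · rw [sum_three_int i, e0, e1, e2, k0, k1, k2]
      have hσσ : σ * σ = 1 := by rcases hσ with h|h <;> rw [h] <;> norm_num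
      ring_nf
      nlinarith [hσσ]
  calc ε / 4 * pF ≤ (T.card : ℝ) := by rw [hcard]; exact hMm
  _ = ∑ x ∈ T, F x := by
      rw [Finset.sum_congr rfl hmem, Finset.sum_const, nsmul_eq_mul, mul_one]
  _ ≤ ∑' x, F x := Summable.sum_le_tsum T (fun x _ => hF0 x) hFs

lemma zNorm_sq {d : ℕ} (p : Fin d → ℤ) : zNorm p ^ 2 = ∑ i, ((p i : ℝ)) ^ 2 :=
  Real.sq_sqrt (by positivity)

lemma abs_coord_le {d : ℕ} (p : Fin d → ℤ) (i : Fin d) : |((p i : ℝ))| ≤ zNorm p := by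
  have h1 := coord_sq_le p i
  have h2 := zNorm_sq p
  have h3 := zNorm_nonneg p
  nlinarith [sq_abs ((p i : ℝ)), abs_nonneg ((p i : ℝ))]

lemma alphaH_nonneg (pF : ℝ) (h k : Fin 3 → ℤ) : 0 ≤ alphaH pF h k := by
  unfold alphaH
  refine mul_nonneg (mul_nonneg (mul_nonneg (mul_nonneg (by positivity) (chi_nonneg _ _))
    (chi_nonneg _ _)) (by positivity)) (tsum_nonneg fun r => ?_)
  exact mul_nonneg (mul_nonneg (chi_nonneg _ _) (chiP_nonneg _ _)) (by split <;> norm_num)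

lemma alphaP_nonneg (pF : ℝ) (p k : Fin 3 → ℤ) : 0 ≤ alphaP pF p k := by
  unfold alphaP
  refine mul_nonneg (mul_nonneg (mul_nonneg (mul_nonneg (by positivity) (chiP_nonneg _ _))
    (chiP_nonneg _ _)) (by positivity)) (tsum_nonneg fun r => ?_)
  exact mul_nonneg (mul_nonneg (chi_nonneg _ _) (chiP_nonneg _ _)) (by split <;> norm_num)

set_option maxHeartbeats 1600000 in
/-- Lower bound for `𝓑` on well-chosen initial data: for a rotationally symmetric `V̂`
supported in the ball of radius `r`, even, vanishing at `0`, positive on `(0,0,m)` for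
`1 ≤ m ≤ r`, there are `C > 0` and `P₀ ≥ 1` such that for all `p_F ≥ P₀` and all finite
sets `H` (inside the Fermi ball, away from the surface) and `P` (outside, away from the
surface) that are `r`-separated and whose points have a coordinate `q_i` with
`ε·p_F² ≤ q_i² ≤ (1−ε)·p_F²`, the indicator `f` of `H ∪ P` satisfies
`|𝓑[f](q)| ≥ C·p_F` for all `q ∈ H ∪ P`. -/
theorem stmt9 (r : ℕ) (hr : 1 ≤ r) (ε : ℝ) (hε0 : 0 < ε) (hε1 : ε < 1)
    (Vh : (Fin 3 → ℤ) → ℝ)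
    (hsupp : ∀ k, (r : ℝ) < zNorm k → Vh k = 0)
    (hsymm : ∀ k, Vh (-k) = Vh k)
    (h0 : Vh 0 = 0)
    (hrot : ∀ k k', zNorm k = zNorm k' → Vh k = Vh k')
    (hpos : ∀ m : ℤ, 1 ≤ m → m ≤ (r : ℤ) → 0 < Vh ![0, 0, m]) :
    ∃ C : ℝ, 0 < C ∧ ∃ P₀ : ℝ, 1 ≤ P₀ ∧
      ∀ pF : ℝ, P₀ ≤ pF →
        ∀ H P : Finset (Fin 3 → ℤ),
          (∀ h ∈ H, zNorm h < pF - 3 * r) →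
          (∀ p ∈ P, pF + 3 * r < zNorm p) →
          (∀ x ∈ H ∪ P, ∀ y ∈ H ∪ P, x ≠ y → (r : ℝ) < zNorm (x - y)) →
          (∀ q ∈ H ∪ P, ∃ i : Fin 3,
            ε * pF ^ 2 ≤ ((q i : ℝ)) ^ 2 ∧ ((q i : ℝ)) ^ 2 ≤ (1 - ε) * pF ^ 2) →
          ∀ q ∈ H ∪ P,
            C * pF ≤ |Bop pF Vh (fun p => if p ∈ H ∪ P then 1 else 0) q| := by
  classical
  have hπ := Real.pi_pos
  have hπ0 := Real.pi_ne_zero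
  have hv : 0 < Vh ![0, 0, 1] := hpos 1 le_rfl (by exact_mod_cast hr)
  refine ⟨Vh ![0, 0, 1] ^ 2 * ε / (4 * (2 * π) ^ 6), by positivity, max 1 (4 / ε),
    le_max_left _ _, ?_⟩
  intro pF hpF H P hH hP hsep hcoord q hq
  have hpF4 : 4 / ε ≤ pF := le_trans (le_max_right _ _) hpF
  have hpF1 : (1 : ℝ) ≤ pF := le_trans (le_max_left _ _) hpF
  have hpF0 : 0 < pF := by linarith
  have hr1 : (1 : ℝ) ≤ (r : ℝ) := by exact_mod_cast hr
  obtain ⟨i, hq1, hq2⟩ := hcoord q hq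
  have hqi0 : q i ≠ 0 := by
    intro h
    rw [h] at hq1
    push_cast at hq1
    nlinarith [mul_pos hε0 (mul_pos hpF0 hpF0)]
  set σ : ℤ := if 0 < q i then 1 else -1 with hσdef
  have hσ : σ = 1 ∨ σ = -1 := by
    rw [hσdef]
    by_cases h : 0 < q i
    · rw [if_pos h]; left; rfl
    · rw [if_neg h]; right; rfl
  have hσq : σ * q i = |q i| := by
    rw [hσdef]
    rcases lt_trichotomy (q i) 0 with h | h | h
    · rw [if_neg (by omega), abs_of_neg h]; ring
    · exact absurd h hqi0
    · rw [if_pos h, abs_of_pos h]; ring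
  have hσσ : σ * σ = 1 := by rcases hσ with h | h <;> rw [h] <;> norm_num
  have hσ2R : (σ : ℝ) * (σ : ℝ) = 1 := by exact_mod_cast hσσ
  have hσqR : (σ : ℝ) * ((q i : ℝ)) = |((q i : ℝ))| := by
    have h1 : ((σ * q i : ℤ) : ℝ) = ((|q i| : ℤ) : ℝ) := by exact_mod_cast hσq
    push_cast at h1
    linarith [h1]
  set k₀ : Fin 3 → ℤ := fun j => if j = i then σ else 0 with hk₀def
  have hk0i : k₀ i = σ := by rw [hk₀def]; simp
  have hk01 : k₀ (i + 1) = 0 := by rw [hk₀def]; simp [fin3_i1 i]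
  have hk02 : k₀ (i + 2) = 0 := by rw [hk₀def]; simp [fin3_i2 i]
  have hk₀norm : zNorm k₀ = 1 := by
    unfold zNorm
    rw [sum_three i (fun j => ((k₀ j : ℝ)) ^ 2), hk0i, hk01, hk02]
    rcases hσ with h | h <;> rw [h] <;> norm_num
  have hVk₀ : Vh k₀ = Vh ![0, 0, 1] := by
    apply hrot
    rw [hk₀norm]
    unfold zNorm
    rw [Fin.sum_univ_three]
    norm_num
    simp
  set f : (Fin 3 → ℤ) → ℝ := fun p => if p ∈ H ∪ P then 1 else 0 with hf
  have hfq : f q = 1 := by rw [hf]; simp only [if_pos hq]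
  set g : (Fin 3 → ℤ) → ℝ := fun k => Vh k ^ 2 * (alphaH pF q k + alphaP pF q k) with hg
  have hg0 : ∀ k, 0 ≤ g k := fun k => mul_nonneg (sq_nonneg _)
    (add_nonneg (alphaH_nonneg _ _ _) (alphaP_nonneg _ _ _))
  have hgs : Summable g := by
    apply summable_of_zNorm_bound g r
    intro k hk
    by_contra hc
    push_neg at hc
    apply hk
    rw [hg]
    simp only [hsupp k hc]
    ring
  have hf0 : ∀ x : Fin 3 → ℤ, x ∉ H ∪ P → f x = 0 := by
    intro x hx
    rw [hf]
    simp only [if_neg hx]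
  have hpt : ∀ k : Fin 3 → ℤ, Vh k ^ 2 *
      (alphaH pF (q - k) k * f (q - k) * (1 - f q)
        - alphaH pF q k * f q * (1 - f (q + k))
        + alphaP pF (q + k) k * f (q + k) * (1 - f q)
        - alphaP pF q k * f q * (1 - f (q - k))) = - g k := by
    intro k
    by_cases hVk : Vh k = 0
    · rw [hVk, hg]; simp only [hVk]; ring
    · have hk0 : k ≠ 0 := fun h => hVk (h ▸ h0)
      have h1 : f (q + k) = 0 := by
        apply hf0
        intro hmem
        apply hVk
        apply hsupp
        have hne : q ≠ q + k := by
          intro h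
          apply hk0
          funext j
          have h2 := congrFun h j
          simp only [Pi.add_apply] at h2
          show k j = 0
          omega
        have h3 := hsep q hq (q + k) hmem hne
        have heq : q - (q + k) = -k := by funext j; simp only [Pi.sub_apply, Pi.add_apply, Pi.neg_apply]; ring
        rw [heq, zNorm_neg] at h3
        exact h3
      have h2 : f (q - k) = 0 := by
        apply hf0
        intro hmem
        apply hVk
        apply hsupp
        have hne : q ≠ q - k := by
          intro h
          apply hk0
          funext j
          have h2 := congrFun h j
          simp only [Pi.sub_apply] at h2
          show k j = 0
          omega
        have h3 := hsep q hq (q - k) hmem hne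
        have heq : q - (q - k) = k := by funext j; simp only [Pi.sub_apply]; ring
        rw [heq] at h3
        exact h3
      rw [hfq, h1, h2, hg]
      ring
  have hBop : Bop pF Vh f q = -(2 * π * ((2 * π) ^ 3)⁻¹ * ∑' k, g k) := by
    unfold Bop
    rw [tsum_congr hpt, tsum_neg]
    ring
  have hS0 : 0 ≤ ∑' k, g k := tsum_nonneg hg0
  have hgk₀ : g k₀ ≤ ∑' k, g k := Summable.le_tsum hgs k₀ fun j _ => hg0 j
  -- coordinate sum facts
  have hq3 : ∑ j, ((q j : ℝ)) ^ 2 = ((q i : ℝ)) ^ 2 + ((q (i+1) : ℝ)) ^ 2 + ((q (i+2) : ℝ)) ^ 2 :=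
    sum_three i (fun j => ((q j : ℝ)) ^ 2)
  have hsqq := zNorm_sq q
  have habs := abs_coord_le q i
  have hzq0 := zNorm_nonneg q
  have habs0 : (0:ℝ) ≤ |((q i : ℝ))| := abs_nonneg _
  have hqabs1 : 1 ≤ |q i| := by
    rcases lt_trichotomy (q i) 0 with h | h | h
    · rw [abs_of_neg h]; omega
    · exact absurd h hqi0
    · rw [abs_of_pos h]; omega
  have hqabs1R : (1:ℝ) ≤ |((q i : ℝ))| := by
    rw [← Int.cast_abs]
    exact_mod_cast hqabs1
  -- the key lower bound on g k₀
  have halpha : Vh ![0, 0, 1] ^ 2 * ((1 / (2 * π)) * ((2 * π) ^ 3)⁻¹ * (ε / 4 * pF)) ≤ g k₀ := by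
    have hgeq : g k₀ = Vh k₀ ^ 2 * (alphaH pF q k₀ + alphaP pF q k₀) := by rw [hg]
    rw [hgeq, hVk₀]
    rcases Finset.mem_union.mp hq with hqH | hqP
    · -- hole case
      have hrange := hH q hqH
      have hzqpF : zNorm q ≤ pF := by linarith
      have hchi1 : chi pF q = 1 := chi_eq_one hzqpF
      have hchiqk : zNorm (q + k₀) ≤ pF := by
        rw [zNorm_le_iff hpF0.le, sum_three i (fun j => (((q + k₀) j : ℝ)) ^ 2)]
        simp only [Pi.add_apply]
        rw [hk0i, hk01, hk02]
        push_cast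
        nlinarith [habs, hsqq, hq3, hzq0, habs0]
      have hchi2 : chi pF (q + k₀) = 1 := chi_eq_one hchiqk
      have htarget : ∑ j, q j * k₀ j = σ * q i := by
        rw [sum_three_int i (fun j => q j * k₀ j), hk0i, hk01, hk02]
        ring
      have hcount : ε / 4 * pF ≤ ∑' x : Fin 3 → ℤ, chi pF x * chiP pF (x + k₀) *
          (if (∑ j, x j * k₀ j) = ∑ j, q j * k₀ j then (1:ℝ) else 0) := by
        apply count_lower pF ε hε0 hε1 hpF4 i σ hσ k₀ hk₀def (σ * q i)
          (by rw [hσq]; exact abs_nonneg _) (|((q i : ℝ))|) habs0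
          (by rw [sq_abs]; exact hq1) (by rw [sq_abs]; exact hq2)
          (le_of_eq (by push_cast; rw [hσqR]))
          (by push_cast; rw [hσqR]; linarith)
        · intro x
          exact mul_nonneg (mul_nonneg (chi_nonneg _ _) (chiP_nonneg _ _)) (by split <;> norm_num)
        · apply summable_of_zNorm_bound _ pF
          intro x hx
          by_contra hc
          push_neg at hc
          apply hx
          rw [chi_eq_zero hc]
          ring
        · intro x hx1 hx2 hx3
          rw [chi_eq_one hx1, chiP_eq_one hx2, htarget, if_pos hx3]
          ring
      have hαHeq : alphaH pF q k₀ = (1 / (2 * π)) * ((2 * π) ^ 3)⁻¹ *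
          ∑' x : Fin 3 → ℤ, chi pF x * chiP pF (x + k₀) *
            (if (∑ j, x j * k₀ j) = ∑ j, q j * k₀ j then (1:ℝ) else 0) := by
        unfold alphaH
        rw [hchi1, hchi2]
        ring
      have hαH : (1 / (2 * π)) * ((2 * π) ^ 3)⁻¹ * (ε / 4 * pF) ≤ alphaH pF q k₀ := by
        rw [hαHeq]
        exact mul_le_mul_of_nonneg_left hcount (by positivity)
      have hαP := alphaP_nonneg pF q k₀
      exact mul_le_mul_of_nonneg_left (by linarith) (sq_nonneg _)
    · -- particle case
      have hrange := hP q hqP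
      have hzqpF : pF < zNorm q := by linarith
      have hchi1 : chiP pF q = 1 := chiP_eq_one hzqpF
      have hchiqk : pF < zNorm (q - k₀) := by
        rw [lt_zNorm_iff hpF0.le, sum_three i (fun j => (((q - k₀) j : ℝ)) ^ 2)]
        simp only [Pi.sub_apply]
        rw [hk0i, hk01, hk02]
        push_cast
        nlinarith [habs, hsqq, hq3, hzq0, habs0, hr1, hpF0]
      have hchi2 : chiP pF (q - k₀) = 1 := chiP_eq_one hchiqk
      have htarget : ∑ j, (q j - k₀ j) * k₀ j = σ * q i - 1 := by
        rw [sum_three_int i (fun j => (q j - k₀ j) * k₀ j), hk0i, hk01, hk02]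
        rcases hσ with h | h <;> rw [h] <;> ring
      have hs0' : 0 ≤ σ * q i - 1 := by rw [hσq]; linarith [hqabs1]
      have hcast : ((σ * q i - 1 : ℤ) : ℝ) = |((q i : ℝ))| - 1 := by
        push_cast
        rw [hσqR]
      have hcount : ε / 4 * pF ≤ ∑' x : Fin 3 → ℤ, chi pF x * chiP pF (x + k₀) *
          (if (∑ j, x j * k₀ j) = ∑ j, (q j - k₀ j) * k₀ j then (1:ℝ) else 0) := by
        apply count_lower pF ε hε0 hε1 hpF4 i σ hσ k₀ hk₀def (σ * q i - 1)
          hs0' (|((q i : ℝ))|) habs0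
          (by rw [sq_abs]; exact hq1) (by rw [sq_abs]; exact hq2)
          (by rw [hcast]; linarith)
          (by rw [hcast])
        · intro x
          exact mul_nonneg (mul_nonneg (chi_nonneg _ _) (chiP_nonneg _ _)) (by split <;> norm_num)
        · apply summable_of_zNorm_bound _ pF
          intro x hx
          by_contra hc
          push_neg at hc
          apply hx
          rw [chi_eq_zero hc]
          ring
        · intro x hx1 hx2 hx3
          rw [chi_eq_one hx1, chiP_eq_one hx2, htarget, if_pos hx3]
          ring
      have hαPeq : alphaP pF q k₀ = (1 / (2 * π)) * ((2 * π) ^ 3)⁻¹ *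
          ∑' x : Fin 3 → ℤ, chi pF x * chiP pF (x + k₀) *
            (if (∑ j, x j * k₀ j) = ∑ j, (q j - k₀ j) * k₀ j then (1:ℝ) else 0) := by
        unfold alphaP
        rw [hchi1, hchi2]
        ring
      have hαP : (1 / (2 * π)) * ((2 * π) ^ 3)⁻¹ * (ε / 4 * pF) ≤ alphaP pF q k₀ := by
        rw [hαPeq]
        exact mul_le_mul_of_nonneg_left hcount (by positivity)
      have hαH := alphaH_nonneg pF q k₀
      exact mul_le_mul_of_nonneg_left (by linarith) (sq_nonneg _)
  -- final assembly
  rw [hBop, abs_neg, abs_of_nonneg (mul_nonneg (by positivity) hS0)]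
  have hfinal : Vh ![0, 0, 1] ^ 2 * ((1 / (2 * π)) * ((2 * π) ^ 3)⁻¹ * (ε / 4 * pF)) ≤
      ∑' k, g k := le_trans halpha hgk₀
  have hle := mul_le_mul_of_nonneg_left hfinal (by positivity :
    (0:ℝ) ≤ 2 * π * ((2 * π) ^ 3)⁻¹)
  refine le_trans (le_of_eq ?_) hle
  field_simp
end
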